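/- arXiv:2501.18976 — 2 statements merged into one kernel-verified Lean document; each statement's English description precedes it below -/
import Mathlib

section
/- Let (𝒦,r) ∈ {(𝒦_□,r_□), (𝒦_△,r_△)}. Let D be a droplet, let y ∈ D and let x ∈ ℤ² be a neighbour of y (i.e. x ≠ y and x − y ∈ 𝒦). Let D' be the smallest droplet (with respect to inclusion) containing D ∪ {x}. Then [D ∪ {x}] = D'. -/
open Set MeasureTheory Filter
open scoped RealInnerProductSpace Pointwise ENNReal

noncomputable section

/-- The Euclidean plane. -/
abbrev E : Type := EuclideanSpace ℝ (Fin 2)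

/-- The point of the plane with coordinates `(a, b)`. -/
def pt (a b : ℝ) : E := (WithLp.equiv 2 (Fin 2 → ℝ)).symm ![a, b]

/-- The integer lattice `ℤ²` viewed inside the plane. -/
def latt : Set E := {x : E | ∃ a b : ℤ, x = pt a b}

/-- One step of threshold bootstrap percolation on `ℤ²` with neighbourhood `𝒦` and threshold `r`. -/
def step (𝒦 : Set E) (r : ℕ) (A : Set E) : Set E :=
  A ∪ {x : E | x ∈ latt ∧ r ≤ (((fun k => x + k) '' 𝒦) ∩ A).ncard}

/-- The bootstrap percolation closure `[A]` (of the lattice points of `A`). -/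
def bpCl (𝒦 : Set E) (r : ℕ) (A : Set E) : Set E :=
  ⋃ t : ℕ, (step 𝒦 r)^[t] (A ∩ latt)

/-- One step of the bootstrap percolation dynamics restricted to the region `B`. -/
def stepIn (𝒦 : Set E) (r : ℕ) (B A : Set E) : Set E :=
  A ∪ {x : E | x ∈ B ∩ latt ∧ r ≤ (((fun k => x + k) '' 𝒦) ∩ A).ncard}

/-- The closure `[A]_B` of `A` under the dynamics restricted to `B`. -/
def bpClIn (𝒦 : Set E) (r : ℕ) (B A : Set E) : Set E :=
  ⋃ t : ℕ, (stepIn 𝒦 r B)^[t] (A ∩ latt)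

/-- Rotation of the plane by `π/2` around the origin. -/
def rot (x : E) : E := pt (-(x 1)) (x 0)

/-- A "nice" set `K`: convex, invariant under rotation by `π/2` about the origin,
with `max {‖k‖ : k ∈ K} = 1`. -/
structure NiceK (K : Set E) : Prop where
  convex : Convex ℝ K
  rotInv : ∀ x ∈ K, rot x ∈ K
  normMax : IsGreatest ((fun k : E => ‖k‖) '' K) 1

/-- The neighbourhood `𝒦_s = (sK) ∩ ℤ²`. -/
def Ks (K : Set E) (s : ℝ) : Set E := (s • K) ∩ latt

/-- The threshold `r_s = 1 + min_{u ≠ 0} |{x ∈ 𝒦_s : ⟨x,u⟩ < 0}|`. -/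
def rKs (K : Set E) (s : ℝ) : ℕ :=
  1 + sInf ((fun u : E => {x : E | x ∈ Ks K s ∧ (inner ℝ x u : ℝ) < 0}.ncard) '' {u : E | u ≠ 0})

/-- The neighbourhood `𝒦_□` of the two-neighbour model. -/
def Ksq : Set E := {pt 0 0, pt 1 0, pt (-1) 0, pt 0 1, pt 0 (-1)}

/-- The neighbourhood `𝒦_△` of the three-neighbour model on the triangular lattice. -/
def Ktri : Set E := Ksq ∪ {pt 1 (-1), pt (-1) 1}

/-- The set `𝒮` of stable directions of the model `(𝒦, r)`. -/
def stableDirs (𝒦 : Set E) (r : ℕ) : Set E :=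
  {u : E | ‖u‖ = 1 ∧ {x : E | x ∈ 𝒦 ∧ (inner ℝ x u : ℝ) < 0}.ncard < r}

/-- The box `Λ_t = [-t,t]² ∩ ℤ²`. -/
def lam (t : ℝ) : Set E := {x ∈ latt | |x 0| ≤ t ∧ |x 1| ≤ t}

/-- A set `V` is `κ`-connected if any two of its points are joined by a finite
sequence of points of `V` with consecutive points at distance at most `κ`. -/
def ConnectedWithin (κ : ℝ) (V : Set E) : Prop :=
  ∀ x ∈ V, ∀ y ∈ V, ∃ (k : ℕ) (f : ℕ → E), f 0 = x ∧ f k = y ∧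
    (∀ i ≤ k, f i ∈ V) ∧ ∀ i < k, dist (f i) (f (i + 1)) ≤ κ

/-- `A` contains a `κ`-connected set of `14` sites. -/
def HasConn14 (κ : ℝ) (A : Set E) : Prop :=
  ∃ V ⊆ A, ConnectedWithin κ V ∧ V.ncard = 14

/-- Projection of a set of lattice points of the plane to the torus `(ℤ/nℤ)²`. -/
def torSet (n : ℕ) (S : Set E) : Set (ZMod n × ZMod n) :=
  {p | ∃ a b : ℤ, pt a b ∈ S ∧ p = ((a : ZMod n), (b : ZMod n))}

/-- One step of bootstrap percolation on the torus `(ℤ/nℤ)²`. -/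
def stepT (n : ℕ) (𝒦 : Set E) (r : ℕ) (A : Set (ZMod n × ZMod n)) : Set (ZMod n × ZMod n) :=
  A ∪ {x | r ≤ (((fun k => x + k) '' torSet n 𝒦) ∩ A).ncard}

/-- The bootstrap percolation closure on the torus `(ℤ/nℤ)²`. -/
def bpClT (n : ℕ) (𝒦 : Set E) (r : ℕ) (A : Set (ZMod n × ZMod n)) : Set (ZMod n × ZMod n) :=
  ⋃ t : ℕ, (stepT n 𝒦 r)^[t] A

/-- The set `A(t)` of the first `t` sites of the torus in the order given by `σ`. -/
def Aset (n : ℕ) (σ : (ZMod n × ZMod n) ≃ Fin (n ^ 2)) (t : ℕ) : Set (ZMod n × ZMod n) :=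
  {x | (σ x : ℕ) + 1 ≤ t}

/-- The percolation time `τ`. -/
def percTime (n : ℕ) (𝒦 : Set E) (r : ℕ) (σ : (ZMod n × ZMod n) ≃ Fin (n ^ 2)) : ℕ :=
  sInf {t : ℕ | bpClT n 𝒦 r (Aset n σ t) = univ}

/-- The probability (over a uniformly random bijection `σ : 𝕋 → {1,…,n²}`) that
`|[A(τ-1)]| ≥ τ (1 + C / log n)`. -/
def probBad (𝒦 : Set E) (r : ℕ) (C : ℝ) (n : ℕ) : ℝ :=
  ({σ : (ZMod n × ZMod n) ≃ Fin (n ^ 2) |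
      (percTime n 𝒦 r σ : ℝ) * (1 + C / Real.log n) ≤
        ((bpClT n 𝒦 r (Aset n σ (percTime n 𝒦 r σ - 1))).ncard : ℝ)}.ncard : ℝ) /
    (Nat.card ((ZMod n × ZMod n) ≃ Fin (n ^ 2)) : ℝ)

/-- The rectangle with corner `x`, side of length `len` in direction `rot u`
(perpendicular to `u`) and side of length `wid` in direction `u`. -/
def rectDir (x u : E) (len wid : ℝ) : Set E :=
  {y : E | ∃ a b : ℝ, a ∈ Icc (0 : ℝ) len ∧ b ∈ Icc (0 : ℝ) wid ∧ y = x + a • rot u + b • u}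

/-- The axis-parallel square `[a, a+c] × [b, b+c]`. -/
def axSquare (a b c : ℝ) : Set E := {x : E | x 0 ∈ Icc a (a + c) ∧ x 1 ∈ Icc b (b + c)}

/-- Droplets for the family `S` of stable directions: `D = ℤ² ∩ ⋂_{u ∈ S} {⟨·,u⟩ ≤ l_u}`. -/
def IsDropletS (S : Set E) (D : Set E) : Prop :=
  ∃ l : E → ℝ, D = latt ∩ ⋂ u ∈ S, {x : E | (inner ℝ x u : ℝ) ≤ l u}

/-- The stable directions `𝒮_□` of the two-neighbour model. -/
def Ssq : Set E := {pt 1 0, pt (-1) 0, pt 0 1, pt 0 (-1)}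

/-- The stable directions `𝒮_△` of the triangular three-neighbour model. -/
def Stri : Set E :=
  Ssq ∪ {pt ((Real.sqrt 2)⁻¹) ((Real.sqrt 2)⁻¹), pt (-(Real.sqrt 2)⁻¹) (-(Real.sqrt 2)⁻¹)}

/-- A valid choice of infection sets `𝒦_v ⊆ A_t ∩ (𝒦 + v)` of size `r`, one for each
newly infected vertex `v`. -/
def IsInfChoice (𝒦 : Set E) (r : ℕ) (A : Set E) (κ : E → Set E) : Prop :=
  ∀ t : ℕ, ∀ v ∈ (step 𝒦 r)^[t + 1] (A ∩ latt) \ (step 𝒦 r)^[t] (A ∩ latt),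
    κ v ⊆ (step 𝒦 r)^[t] (A ∩ latt) ∩ ((fun k => v + k) '' 𝒦) ∧ (κ v).ncard = r

/-- The out-degree of `u` in the infection graph determined by the choice `κ`. -/
def outDeg (𝒦 : Set E) (r : ℕ) (A : Set E) (κ : E → Set E) (u : E) : ℕ :=
  {v : E | (∃ t : ℕ, v ∈ (step 𝒦 r)^[t + 1] (A ∩ latt) \ (step 𝒦 r)^[t] (A ∩ latt)) ∧
    u ∈ κ v}.ncard

/-- A vertex of `[A]` is good if its out-degree in the infection graph is at least `0.9 r`. -/
def IsGood (𝒦 : Set E) (r : ℕ) (A : Set E) (κ : E → Set E) (u : E) : Prop :=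
  u ∈ bpCl 𝒦 r A ∧ (0.9 : ℝ) * r ≤ (outDeg 𝒦 r A κ u : ℝ)

/-- A fat convex set: bounded, convex, and all vertical and horizontal chords have
length at least `c`. -/
def IsFat (c : ℝ) (P : Set E) : Prop :=
  Convex ℝ P ∧ Bornology.IsBounded P ∧
  (∀ a : ℝ, (P ∩ {p : E | p 0 = a}).Nonempty → c ≤ Metric.diam (P ∩ {p : E | p 0 = a})) ∧
  (∀ b : ℝ, (P ∩ {p : E | p 1 = b}).Nonempty → c ≤ Metric.diam (P ∩ {p : E | p 1 = b}))

def xmin (P : Set E) : ℝ := sInf ((fun p : E => p 0) '' P)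
def xmax (P : Set E) : ℝ := sSup ((fun p : E => p 0) '' P)
def ymin (P : Set E) : ℝ := sInf ((fun p : E => p 1) '' P)
def ymax (P : Set E) : ℝ := sSup ((fun p : E => p 1) '' P)

/-- A convex set is horizontal if its horizontal extent is at least its vertical extent. -/
def IsHorizontal (P : Set E) : Prop := ymax P - ymin P ≤ xmax P - xmin P

/-- The upper boundary function of `P`. -/
def upperF (P : Set E) (a : ℝ) : ℝ := sSup {y : ℝ | pt a y ∈ P}

/-- The lower boundary function of `P`. -/
def lowerF (P : Set E) (a : ℝ) : ℝ := sInf {y : ℝ | pt a y ∈ P}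

/-- Slopes of tangent (supporting) lines to the upper boundary of `P` at abscissa `a`. -/
def upperSlopes (P : Set E) (a : ℝ) : Set ℝ :=
  {m : ℝ | ∀ t : ℝ, {y : ℝ | pt t y ∈ P}.Nonempty → upperF P t ≤ upperF P a + m * (t - a)}

/-- Slopes of tangent (supporting) lines to the lower boundary of `P` at abscissa `a`. -/
def lowerSlopes (P : Set E) (a : ℝ) : Set ℝ :=
  {m : ℝ | ∀ t : ℝ, {y : ℝ | pt t y ∈ P}.Nonempty → lowerF P a + m * (t - a) ≤ lowerF P t}

/-- The vertical chord `P_{1,a}` is admissible: the tangent angles at the chord are in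
`[-4π/9, 4π/9]` and the tangent slopes barely change at horizontal distance `C₄ s`. -/
def IsAdmissible (C₃ C₄ s : ℝ) (P : Set E) (a : ℝ) : Prop :=
  xmin P + C₄ * s < a ∧ a < xmax P - C₄ * s ∧ (∃ y : ℝ, pt a y ∈ P) ∧
  (∀ m ∈ upperSlopes P a, |Real.arctan m| ≤ 4 * Real.pi / 9) ∧
  (∀ m ∈ lowerSlopes P a, |Real.arctan m| ≤ 4 * Real.pi / 9) ∧
  (∀ m₁ ∈ upperSlopes P (a - C₄ * s), ∀ m₂ ∈ upperSlopes P (a + C₄ * s),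
    Real.arctan m₁ - Real.arctan m₂ ≤ 1 / C₃) ∧
  (∀ m₁ ∈ lowerSlopes P (a - C₄ * s), ∀ m₂ ∈ lowerSlopes P (a + C₄ * s),
    Real.arctan m₂ - Real.arctan m₁ ≤ 1 / C₃)

/-- The set `𝒬` of quasi-stable directions. -/
def quasiStable (s : ℝ) : Set E :=
  {u : E | ‖u‖ = 1 ∧ ∃ a b : ℤ, |(a : ℝ)| ≤ s ∧ |(b : ℝ)| ≤ s ∧ pt a b ≠ 0 ∧
    ∃ c : ℝ, pt a b = c • u}

/-- The (possibly improper) half-plane `{⟨·,u⟩ ≤ l}` for `l ∈ ℝ ∪ {±∞}`. -/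
def ehs (u : E) (l : EReal) : Set E := {x : E | (((inner ℝ x u : ℝ) : ℝ) : EReal) ≤ l}

/-- The droplet with radii `l : E → EReal` (indexed by the quasi-stable directions). -/
def dropletOf (s : ℝ) (l : E → EReal) : Set E := ⋂ u ∈ quasiStable s, ehs u (l u)

/-- `D` is a droplet for the quasi-stable directions. -/
def IsDropletQ (s : ℝ) (D : Set E) : Prop := ∃ l : E → EReal, D = dropletOf s l

/-- The tight radius of `D` in direction `u`. -/
def tight (D : Set E) (u : E) : EReal := sSup ((fun x : E => (((inner ℝ x u : ℝ) : ℝ) : EReal)) '' D)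

/-- The `u`-side of a droplet `D`. -/
def uside (u : E) (D : Set E) : Set E := {x ∈ D | ∀ y ∈ D, (inner ℝ y u : ℝ) ≤ (inner ℝ x u : ℝ)}

/-- A non-degenerate droplet: each `u`-side has length at least `C^{1/3}` for unstable
`u ∈ 𝒬` and at least `C^{1/2}` for stable `u ∈ 𝒬`. -/
def IsNondeg (s C : ℝ) (𝒦 : Set E) (r : ℕ) (D : Set E) : Prop :=
  IsDropletQ s D ∧ ∀ u ∈ quasiStable s,
    (u ∉ stableDirs 𝒦 r → C ^ ((1 : ℝ) / 3) ≤ Metric.diam (uside u D)) ∧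
    (u ∈ stableDirs 𝒦 r → C ^ ((1 : ℝ) / 2) ≤ Metric.diam (uside u D))

/-- The droplet obtained from `D` by replacing its tight radius in direction `v` by `m`. -/
def extDroplet (s : ℝ) (v : E) (D : Set E) (m : EReal) : Set E :=
  (⋂ u ∈ quasiStable s \ {v}, ehs u (tight D u)) ∩ ehs v m

/-- `D'` is the `v`-extension of the droplet `D`. -/
def IsExtension (s : ℝ) (v : E) (D D' : Set E) : Prop :=
  ∃ l' : EReal, tight D v < l' ∧ D' = extDroplet s v D l' ∧
    ((D' \ D) ∩ latt).Nonempty ∧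
    ∀ m : EReal, tight D v < m → ((extDroplet s v D m \ D) ∩ latt).Nonempty → l' ≤ m

/-- Rotation of the plane by the angle `θ`. -/
def rotA (θ : ℝ) (u : E) : E :=
  pt (Real.cos θ * u 0 - Real.sin θ * u 1) (Real.sin θ * u 0 + Real.cos θ * u 1)

/-- The closed half-plane `H̄_u(l)`. -/
def hs (u : E) (l : ℝ) : Set E := {x : E | (inner ℝ x u : ℝ) ≤ l}

/-- The open half-plane `ℍ_u(l)`. -/
def hso (u : E) (l : ℝ) : Set E := {x : E | (inner ℝ x u : ℝ) < l}

/-- Translate of a set. -/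
def transl (x : E) (S : Set E) : Set E := (fun y => x + y) '' S

/-- The rectangle `x + (H̄_u ∩ H̄_{u+π/2} ∩ H̄_{u+π}(wid) ∩ H̄_{u-π/2}(len))`. -/
def rectHS (x u : E) (wid len : ℝ) : Set E :=
  transl x (hs u 0 ∩ hs (rotA (Real.pi / 2) u) 0 ∩ hs (rotA Real.pi u) wid ∩
    hs (rotA (-(Real.pi / 2)) u) len)

end

noncomputable section
abbrev P := ℤ × ℤ

def NsqZ : Set P := {(0,0),(1,0),(-1,0),(0,1),(0,-1)}
def NtriZ : Set P := {(0,0),(1,0),(-1,0),(0,1),(0,-1),(1,-1),(-1,1)}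

lemma NsqZ_finite : NsqZ.Finite := by unfold NsqZ; exact Set.toFinite _
lemma NtriZ_finite : NtriZ.Finite := by unfold NtriZ; exact Set.toFinite _

def stepZ (N : Set P) (r : ℕ) (A : Set P) : Set P :=
  A ∪ {z | r ≤ {n ∈ N | z + n ∈ A}.ncard}

def clZ (N : Set P) (r : ℕ) (A : Set P) : Set P := ⋃ t : ℕ, (stepZ N r)^[t] A

lemma subset_stepZ (N r) (A : Set P) : A ⊆ stepZ N r A := subset_union_left

lemma stepZ_mono (N r) {A B : Set P} (hf : N.Finite) (h : A ⊆ B) : stepZ N r A ⊆ stepZ N r B := by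
  refine union_subset_union h ?_
  intro z hz
  refine le_trans hz (Set.ncard_le_ncard ?_ (hf.subset (by intro n hn; exact hn.1)))
  intro n hn; exact ⟨hn.1, h hn.2⟩

lemma iter_le_iter (N r) (A : Set P) {s t : ℕ} (h : s ≤ t) :
    (stepZ N r)^[s] A ⊆ (stepZ N r)^[t] A := by
  induction t with
  | zero => simp_all
  | succ t ih =>
    rcases Nat.lt_or_ge s (t+1) with h' | h'
    · rw [Function.iterate_succ_apply']
      exact (ih (by omega)).trans (subset_stepZ _ _ _)
    · have : s = t + 1 := by omega
      subst this; rfl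

lemma subset_clZ (N r) (A : Set P) : A ⊆ clZ N r A := subset_iUnion_of_subset 0 (by rfl)

lemma clZ_subset (N r) {A B : Set P} (hf : N.Finite) (hB : stepZ N r B ⊆ B) (h : A ⊆ B) :
    clZ N r A ⊆ B := by
  refine iUnion_subset fun t => ?_
  induction t with
  | zero => exact h
  | succ t ih =>
    rw [Function.iterate_succ_apply']
    exact (stepZ_mono N r hf ih).trans hB

lemma clZ_infect {N : Set P} {r : ℕ} {A : Set P} (hf : N.Finite) {z : P}
    (h : r ≤ {n ∈ N | z + n ∈ clZ N r A}.ncard) : z ∈ clZ N r A := by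
  classical
  set S := {n ∈ N | z + n ∈ clZ N r A} with hS
  have hSfin : S.Finite := hf.subset (fun n hn => hn.1)
  have hch : ∀ n ∈ hSfin.toFinset, ∃ t : ℕ, z + n ∈ (stepZ N r)^[t] A := by
    intro n hn
    rw [Set.Finite.mem_toFinset] at hn
    exact mem_iUnion.1 hn.2
  choose f hfx using hch
  set T := hSfin.toFinset.sup (fun n => if hn : n ∈ hSfin.toFinset then f n hn else 0) with hT
  have hall : ∀ n ∈ S, z + n ∈ (stepZ N r)^[T] A := by
    intro n hn
    have hn' : n ∈ hSfin.toFinset := hSfin.mem_toFinset.2 hn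
    refine iter_le_iter N r A ?_ (hfx n hn')
    calc f n hn' = (if hn : n ∈ hSfin.toFinset then f n hn else 0) := by simp [hn']
    _ ≤ T := Finset.le_sup (f := fun n => if hn : n ∈ hSfin.toFinset then f n hn else 0) hn'
  refine mem_iUnion.2 ⟨T+1, ?_⟩
  rw [Function.iterate_succ_apply']
  right
  show r ≤ {n ∈ N | z + n ∈ (stepZ N r)^[T] A}.ncard
  exact le_trans h (Set.ncard_le_ncard (fun n hn => ⟨hn.1, hall n hn⟩) (hf.subset fun n hn => hn.1))

lemma infect3 {A : Set P} {z a b c : P} (ha : a ∈ NtriZ) (hb : b ∈ NtriZ) (hc : c ∈ NtriZ)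
    (hab : a ≠ b) (hac : a ≠ c) (hbc : b ≠ c)
    (hza : z + a ∈ clZ NtriZ 3 A) (hzb : z + b ∈ clZ NtriZ 3 A) (hzc : z + c ∈ clZ NtriZ 3 A) :
    z ∈ clZ NtriZ 3 A := by
  apply clZ_infect NtriZ_finite
  have hsub : ({a, b, c} : Set P) ⊆ {n ∈ NtriZ | z + n ∈ clZ NtriZ 3 A} := by
    rintro n (rfl | rfl | rfl)
    exacts [⟨ha, hza⟩, ⟨hb, hzb⟩, ⟨hc, hzc⟩]
  have h3 : ({a, b, c} : Set P).ncard = 3 := Set.ncard_eq_three.mpr ⟨a, b, c, hab, hac, hbc, rfl⟩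
  calc (3:ℕ) = ({a,b,c} : Set P).ncard := h3.symm
  _ ≤ _ := Set.ncard_le_ncard hsub (NtriZ_finite.subset fun n hn => hn.1)

lemma infect2 {A : Set P} {z a b : P} (ha : a ∈ NsqZ) (hb : b ∈ NsqZ) (hab : a ≠ b)
    (hza : z + a ∈ clZ NsqZ 2 A) (hzb : z + b ∈ clZ NsqZ 2 A) :
    z ∈ clZ NsqZ 2 A := by
  apply clZ_infect NsqZ_finite
  have hsub : ({a, b} : Set P) ⊆ {n ∈ NsqZ | z + n ∈ clZ NsqZ 2 A} := by
    rintro n (rfl | rfl)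
    exacts [⟨ha, hza⟩, ⟨hb, hzb⟩]
  calc (2:ℕ) = ({a,b} : Set P).ncard := (Set.ncard_pair hab).symm
  _ ≤ _ := Set.ncard_le_ncard hsub (NsqZ_finite.subset fun n hn => hn.1)

def HexZ (u₁ u₂ u₃ u₄ u₅ u₆ : ℤ) : Set P :=
  {z | z.1 ≤ u₁ ∧ -z.1 ≤ u₂ ∧ z.2 ≤ u₃ ∧ -z.2 ≤ u₄ ∧ z.1+z.2 ≤ u₅ ∧ -(z.1+z.2) ≤ u₆}

def RectZ (u₁ u₂ u₃ u₄ : ℤ) : Set P :=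
  {z | z.1 ≤ u₁ ∧ -z.1 ≤ u₂ ∧ z.2 ≤ u₃ ∧ -z.2 ≤ u₄}

lemma ncard_pair_le (a b : P) : ({a,b} : Set P).ncard ≤ 2 := by
  refine le_trans (Set.ncard_insert_le _ _) ?_
  simp
lemma hex_stable {u₁ u₂ u₃ u₄ u₅ u₆ : ℤ} {A : Set P} (hA : A ⊆ HexZ u₁ u₂ u₃ u₄ u₅ u₆) :
    stepZ NtriZ 3 A ⊆ HexZ u₁ u₂ u₃ u₄ u₅ u₆ := by
  rintro z (hz | hz)
  · exact hA hz
  · simp only [mem_setOf_eq] at hz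
    by_contra hzout
    simp only [HexZ, mem_setOf_eq, not_and_or, not_le] at hzout
    have key : ∀ (a b : P), {n ∈ NtriZ | z + n ∈ A} ⊆ {a, b} → False := by
      intro a b hsub
      have := le_trans hz (le_trans (Set.ncard_le_ncard hsub (Set.toFinite _)) (ncard_pair_le a b))
      omega
    rcases hzout with h | h | h | h | h | h
    · refine key (-1,0) (-1,1) ?_
      rintro n ⟨hn, hA'⟩
      have h1 := (hA hA').1
      simp only [NtriZ, mem_insert_iff, mem_singleton_iff] at hn
      simp only [mem_insert_iff, mem_singleton_iff]
      rcases hn with rfl|rfl|rfl|rfl|rfl|rfl|rfl <;> simp [Prod.ext_iff] at h1 ⊢ <;> omega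
    · refine key (1,0) (1,-1) ?_
      rintro n ⟨hn, hA'⟩
      have h1 := (hA hA').2.1
      simp only [NtriZ, mem_insert_iff, mem_singleton_iff] at hn
      simp only [mem_insert_iff, mem_singleton_iff]
      rcases hn with rfl|rfl|rfl|rfl|rfl|rfl|rfl <;> simp [Prod.ext_iff] at h1 ⊢ <;> omega
    · refine key (0,-1) (1,-1) ?_
      rintro n ⟨hn, hA'⟩
      have h1 := (hA hA').2.2.1
      simp only [NtriZ, mem_insert_iff, mem_singleton_iff] at hn
      simp only [mem_insert_iff, mem_singleton_iff]
      rcases hn with rfl|rfl|rfl|rfl|rfl|rfl|rfl <;> simp [Prod.ext_iff] at h1 ⊢ <;> omega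
    · refine key (0,1) (-1,1) ?_
      rintro n ⟨hn, hA'⟩
      have h1 := (hA hA').2.2.2.1
      simp only [NtriZ, mem_insert_iff, mem_singleton_iff] at hn
      simp only [mem_insert_iff, mem_singleton_iff]
      rcases hn with rfl|rfl|rfl|rfl|rfl|rfl|rfl <;> simp [Prod.ext_iff] at h1 ⊢ <;> omega
    · refine key (-1,0) (0,-1) ?_
      rintro n ⟨hn, hA'⟩
      have h1 := (hA hA').2.2.2.2.1
      simp only [NtriZ, mem_insert_iff, mem_singleton_iff] at hn
      simp only [mem_insert_iff, mem_singleton_iff]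
      rcases hn with rfl|rfl|rfl|rfl|rfl|rfl|rfl <;> simp [Prod.ext_iff] at h1 ⊢ <;> omega
    · refine key (1,0) (0,1) ?_
      rintro n ⟨hn, hA'⟩
      have h1 := (hA hA').2.2.2.2.2
      simp only [NtriZ, mem_insert_iff, mem_singleton_iff] at hn
      simp only [mem_insert_iff, mem_singleton_iff]
      rcases hn with rfl|rfl|rfl|rfl|rfl|rfl|rfl <;> simp [Prod.ext_iff] at h1 ⊢ <;> omega

lemma rect_stable {u₁ u₂ u₃ u₄ : ℤ} {A : Set P} (hA : A ⊆ RectZ u₁ u₂ u₃ u₄) :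
    stepZ NsqZ 2 A ⊆ RectZ u₁ u₂ u₃ u₄ := by
  rintro z (hz | hz)
  · exact hA hz
  · simp only [mem_setOf_eq] at hz
    by_contra hzout
    simp only [RectZ, mem_setOf_eq, not_and_or, not_le] at hzout
    have key : ∀ (a : P), {n ∈ NsqZ | z + n ∈ A} ⊆ {a} → False := by
      intro a hsub
      have h1 : ({a} : Set P).ncard = 1 := Set.ncard_singleton a
      have := le_trans hz (Set.ncard_le_ncard hsub (Set.toFinite _))
      omega
    rcases hzout with h | h | h | h
    · refine key (-1,0) ?_
      rintro n ⟨hn, hA'⟩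
      have h1 := (hA hA').1
      simp only [NsqZ, mem_insert_iff, mem_singleton_iff] at hn
      simp only [mem_singleton_iff]
      rcases hn with rfl|rfl|rfl|rfl|rfl <;> simp [Prod.ext_iff] at h1 ⊢ <;> omega
    · refine key (1,0) ?_
      rintro n ⟨hn, hA'⟩
      have h1 := (hA hA').2.1
      simp only [NsqZ, mem_insert_iff, mem_singleton_iff] at hn
      simp only [mem_singleton_iff]
      rcases hn with rfl|rfl|rfl|rfl|rfl <;> simp [Prod.ext_iff] at h1 ⊢ <;> omega
    · refine key (0,-1) ?_
      rintro n ⟨hn, hA'⟩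
      have h1 := (hA hA').2.2.1
      simp only [NsqZ, mem_insert_iff, mem_singleton_iff] at hn
      simp only [mem_singleton_iff]
      rcases hn with rfl|rfl|rfl|rfl|rfl <;> simp [Prod.ext_iff] at h1 ⊢ <;> omega
    · refine key (0,1) ?_
      rintro n ⟨hn, hA'⟩
      have h1 := (hA hA').2.2.2
      simp only [NsqZ, mem_insert_iff, mem_singleton_iff] at hn
      simp only [mem_singleton_iff]
      rcases hn with rfl|rfl|rfl|rfl|rfl <;> simp [Prod.ext_iff] at h1 ⊢ <;> omega
lemma colDown {u₁ u₂ u₃ u₄ u₅ u₆ : ℤ} {x : P}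
    (hx1 : x.1 = u₁ + 1) (hx3 : x.2 ≤ u₃) (hx5 : x.1 + x.2 ≤ u₅ + 1)
    (hx6 : -(x.1 + x.2) ≤ u₆ - 1)
    (hT5 : -u₆ ≤ u₁ - u₄) (hAA : -u₂ ≤ u₁) :
    ∀ m : ℕ, ∀ j : ℤ, j = x.2 - m → -j ≤ u₄ →
      ((u₁ + 1, j) : P) ∈ clZ NtriZ 3 (HexZ u₁ u₂ u₃ u₄ u₅ u₆ ∪ {x}) := by
  intro m
  induction m with
  | zero =>
    intro j hj _
    have : ((u₁ + 1, j) : P) = x := by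
      rw [Prod.ext_iff]; constructor <;> simp <;> omega
    rw [this]
    exact subset_clZ _ _ _ (Or.inr rfl)
  | succ m ih =>
    intro j hj h4
    push_cast at hj
    apply infect3 (a := (0,1)) (b := (-1,1)) (c := (-1,0))
    · simp [NtriZ]
    · simp [NtriZ]
    · simp [NtriZ]
    · decide
    · decide
    · decide
    · have e : ((u₁ + 1, j) : P) + (0,1) = ((u₁ + 1, j + 1) : P) := by
        simp [Prod.ext_iff]
      rw [e]
      exact ih (j+1) (by push_cast; omega) (by omega)
    · refine subset_clZ _ _ _ (Or.inl ?_)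
      simp [HexZ, Prod.mk_add_mk]
      omega
    · refine subset_clZ _ _ _ (Or.inl ?_)
      simp [HexZ, Prod.mk_add_mk]
      omega

lemma colUp {u₁ u₂ u₃ u₄ u₅ u₆ : ℤ} {x : P}
    (hx1 : x.1 = u₁ + 1) (hx4 : -x.2 ≤ u₄) (hx5 : x.1 + x.2 ≤ u₅)
    (hx6 : -(x.1 + x.2) ≤ u₆ - 1)
    (hT1 : u₅ ≤ u₁ + u₃) (hAA : -u₂ ≤ u₁) :
    ∀ m : ℕ, ∀ j : ℤ, j = x.2 + m → u₁ + 1 + j ≤ u₅ →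
      ((u₁ + 1, j) : P) ∈ clZ NtriZ 3 (HexZ u₁ u₂ u₃ u₄ u₅ u₆ ∪ {x}) := by
  intro m
  induction m with
  | zero =>
    intro j hj _
    have : ((u₁ + 1, j) : P) = x := by
      rw [Prod.ext_iff]; constructor <;> simp <;> omega
    rw [this]
    exact subset_clZ _ _ _ (Or.inr rfl)
  | succ m ih =>
    intro j hj h5
    push_cast at hj
    apply infect3 (a := (0,-1)) (b := (-1,0)) (c := (-1,1))
    · simp [NtriZ]
    · simp [NtriZ]
    · simp [NtriZ]
    · decide
    · decide
    · decide
    · have e : ((u₁ + 1, j) : P) + (0,-1) = ((u₁ + 1, j - 1) : P) := by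
        simp [Prod.ext_iff]; try omega
      rw [e]
      exact ih (j-1) (by push_cast; omega) (by omega)
    · refine subset_clZ _ _ _ (Or.inl ?_)
      simp [HexZ, Prod.mk_add_mk]
      omega
    · refine subset_clZ _ _ _ (Or.inl ?_)
      simp [HexZ, Prod.mk_add_mk]
      omega

lemma diagUpLeft {u₁ u₂ u₃ u₄ u₅ u₆ : ℤ} {x : P}
    (hxd : x.1 + x.2 = u₅ + 1) (hx1 : x.1 ≤ u₁ + 1) (hx2 : -x.1 ≤ u₂ - 1)
    (hx3 : x.2 ≤ u₃) (hx4 : -x.2 ≤ u₄)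
    (hT3 : u₁ - u₄ ≤ u₅) (hT4 : u₃ - u₂ ≤ u₅) (hEE : -u₆ ≤ u₅) :
    ∀ m : ℕ, ∀ i : ℤ, i = x.1 - m → u₅ + 1 - i ≤ u₃ → -i ≤ u₂ →
      ((i, u₅ + 1 - i) : P) ∈ clZ NtriZ 3 (HexZ u₁ u₂ u₃ u₄ u₅ u₆ ∪ {x}) := by
  intro m
  induction m with
  | zero =>
    intro i hi _ _
    have : ((i, u₅ + 1 - i) : P) = x := by
      rw [Prod.ext_iff]; constructor <;> simp <;> omega
    rw [this]
    exact subset_clZ _ _ _ (Or.inr rfl)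
  | succ m ih =>
    intro i hi h3 h2
    push_cast at hi
    apply infect3 (a := (1,-1)) (b := (0,-1)) (c := (-1,0))
    · simp [NtriZ]
    · simp [NtriZ]
    · simp [NtriZ]
    · decide
    · decide
    · decide
    · have e : ((i, u₅ + 1 - i) : P) + (1,-1) = ((i + 1, u₅ + 1 - (i+1)) : P) := by
        simp [Prod.ext_iff]; omega
      rw [e]
      exact ih (i+1) (by push_cast; omega) (by omega) (by omega)
    · refine subset_clZ _ _ _ (Or.inl ?_)
      simp [HexZ, Prod.mk_add_mk]
      omega
    · refine subset_clZ _ _ _ (Or.inl ?_)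
      simp [HexZ, Prod.mk_add_mk]
      omega

lemma diagDownRight {u₁ u₂ u₃ u₄ u₅ u₆ : ℤ} {x : P}
    (hxd : x.1 + x.2 = u₅ + 1) (hx1 : x.1 ≤ u₁) (hx2 : -x.1 ≤ u₂ - 1)
    (hx3 : x.2 ≤ u₃)
    (hT3 : u₁ - u₄ ≤ u₅) (hEE : -u₆ ≤ u₅) :
    ∀ m : ℕ, ∀ i : ℤ, i = x.1 + m → i ≤ u₁ → -(u₅ + 1 - i) ≤ u₄ →
      ((i, u₅ + 1 - i) : P) ∈ clZ NtriZ 3 (HexZ u₁ u₂ u₃ u₄ u₅ u₆ ∪ {x}) := by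
  intro m
  induction m with
  | zero =>
    intro i hi _ _
    have : ((i, u₅ + 1 - i) : P) = x := by
      rw [Prod.ext_iff]; constructor <;> simp <;> omega
    rw [this]
    exact subset_clZ _ _ _ (Or.inr rfl)
  | succ m ih =>
    intro i hi h1 h4
    push_cast at hi
    apply infect3 (a := (-1,1)) (b := (-1,0)) (c := (0,-1))
    · simp [NtriZ]
    · simp [NtriZ]
    · simp [NtriZ]
    · decide
    · decide
    · decide
    · have e : ((i, u₅ + 1 - i) : P) + (-1,1) = ((i - 1, u₅ + 1 - (i-1)) : P) := by
        simp [Prod.ext_iff]; omega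
      rw [e]
      exact ih (i-1) (by push_cast; omega) (by omega) (by omega)
    · refine subset_clZ _ _ _ (Or.inl ?_)
      simp [HexZ, Prod.mk_add_mk]
      omega
    · refine subset_clZ _ _ _ (Or.inl ?_)
      simp [HexZ, Prod.mk_add_mk]
      omega

def PmainT (k : P) : Prop :=
  ∀ u₁ u₂ u₃ u₄ u₅ u₆ : ℤ, ∀ y : P,
    y ∈ HexZ u₁ u₂ u₃ u₄ u₅ u₆ →
    (∃ z ∈ HexZ u₁ u₂ u₃ u₄ u₅ u₆, z.1 = u₁) →
    (∃ z ∈ HexZ u₁ u₂ u₃ u₄ u₅ u₆, -z.1 = u₂) →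
    (∃ z ∈ HexZ u₁ u₂ u₃ u₄ u₅ u₆, z.2 = u₃) →
    (∃ z ∈ HexZ u₁ u₂ u₃ u₄ u₅ u₆, -z.2 = u₄) →
    (∃ z ∈ HexZ u₁ u₂ u₃ u₄ u₅ u₆, z.1 + z.2 = u₅) →
    (∃ z ∈ HexZ u₁ u₂ u₃ u₄ u₅ u₆, -(z.1 + z.2) = u₆) →
    clZ NtriZ 3 (HexZ u₁ u₂ u₃ u₄ u₅ u₆ ∪ {y + k}) =
      HexZ (max u₁ (y+k).1) (max u₂ (-(y+k).1)) (max u₃ (y+k).2) (max u₄ (-(y+k).2))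
        (max u₅ ((y+k).1+(y+k).2)) (max u₆ (-((y+k).1+(y+k).2)))

lemma hexZ_mono {u₁ u₂ u₃ u₄ u₅ u₆ v₁ v₂ v₃ v₄ v₅ v₆ : ℤ} (h1 : u₁ ≤ v₁) (h2 : u₂ ≤ v₂)
    (h3 : u₃ ≤ v₃) (h4 : u₄ ≤ v₄) (h5 : u₅ ≤ v₅) (h6 : u₆ ≤ v₆) :
    HexZ u₁ u₂ u₃ u₄ u₅ u₆ ⊆ HexZ v₁ v₂ v₃ v₄ v₅ v₆ := by
  intro z hz
  simp only [HexZ, mem_setOf_eq] at hz ⊢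
  omega

lemma coreTri : PmainT (1, 0) := by
  intro u₁ u₂ u₃ u₄ u₅ u₆ y hy h1 h2 h3 h4 h5 h6
  set x : P := y + (1,0) with hxdef
  have hx1 : x.1 = y.1 + 1 := rfl
  have hx2 : x.2 = y.2 := by simp [hxdef]
  simp only [HexZ, mem_setOf_eq] at hy
  obtain ⟨z1, hz1, hz1'⟩ := h1
  obtain ⟨z3, hz3, hz3'⟩ := h3
  obtain ⟨z4, hz4, hz4'⟩ := h4
  obtain ⟨z5, hz5, hz5'⟩ := h5
  simp only [HexZ, mem_setOf_eq] at hz1 hz3 hz4 hz5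
  have hT1 : u₅ ≤ u₁ + u₃ := by omega
  have hT3 : u₁ - u₄ ≤ u₅ := by omega
  have hT4 : u₃ - u₂ ≤ u₅ := by omega
  have hT5 : -u₆ ≤ u₁ - u₄ := by omega
  have hAA : -u₂ ≤ u₁ := by omega
  have hEE : -u₆ ≤ u₅ := by omega
  -- trivial maxes
  rw [show max u₂ (-x.1) = u₂ by omega, show max u₃ x.2 = u₃ by omega,
      show max u₄ (-x.2) = u₄ by omega, show max u₆ (-(x.1+x.2)) = u₆ by omega]
  -- the whole closure is contained in the big hexagon
  have hub : clZ NtriZ 3 (HexZ u₁ u₂ u₃ u₄ u₅ u₆ ∪ {x}) ⊆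
      HexZ (max u₁ x.1) u₂ u₃ u₄ (max u₅ (x.1+x.2)) u₆ := by
    refine clZ_subset _ _ NtriZ_finite (hex_stable (subset_refl _)) ?_
    rintro z (hz | rfl)
    · exact hexZ_mono (le_max_left _ _) le_rfl le_rfl le_rfl (le_max_left _ _) le_rfl hz
    · simp only [HexZ, mem_setOf_eq]
      constructor; · omega
      refine ⟨by omega, by omega, by omega, by omega, by omega⟩
  have hD : HexZ u₁ u₂ u₃ u₄ u₅ u₆ ⊆ clZ NtriZ 3 (HexZ u₁ u₂ u₃ u₄ u₅ u₆ ∪ {x}) :=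
    fun w hw => subset_clZ _ _ _ (Or.inl hw)
  refine subset_antisymm hub ?_
  intro z hz
  simp only [HexZ, mem_setOf_eq] at hz
  by_cases hzD : z ∈ HexZ u₁ u₂ u₃ u₄ u₅ u₆
  · exact hD hzD
  simp only [HexZ, mem_setOf_eq, not_and_or, not_le] at hzD
  have hviol : z.1 = u₁ + 1 ∨ z.1 + z.2 = u₅ + 1 := by omega
  have hz' : z = ((z.1, z.2) : P) := by ext <;> simp
  rcases hviol with hv | hv
  · -- new column
    have hxx1 : x.1 = u₁ + 1 := by omega
    rcases le_or_gt z.2 x.2 with hle | hlt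
    · rw [hz', show z.1 = u₁ + 1 from hv]
      exact colDown hxx1 (by omega) (by omega) (by omega) hT5 hAA (x.2 - z.2).toNat z.2
        (by omega) (by omega)
    · -- column upwards: here x.1 + x.2 ≤ u₅
      have hxd : x.1 + x.2 ≤ u₅ := by omega
      rw [hz', show z.1 = u₁ + 1 from hv]
      exact colUp hxx1 (by omega) hxd (by omega) hT1 hAA (z.2 - x.2).toNat z.2
        (by omega) (by omega)
  · -- new diagonal
    have hxxd : x.1 + x.2 = u₅ + 1 := by omega
    have hz'' : z = ((z.1, u₅ + 1 - z.1) : P) := by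
      rw [Prod.ext_iff]; constructor <;> simp <;> omega
    rcases le_or_gt z.1 x.1 with hle | hlt
    · rw [hz'']
      exact diagUpLeft hxxd (by omega) (by omega) (by omega) (by omega) hT3 hT4 hEE
        (x.1 - z.1).toNat z.1 (by omega) (by omega) (by omega)
    · have hxu : x.1 ≤ u₁ := by omega
      rw [hz'']
      exact diagDownRight hxxd hxu (by omega) (by omega) hT3 hEE
        (z.1 - x.1).toNat z.1 (by omega) (by omega) (by omega)

def rhoE : P ≃+ P where
  toFun := fun z => (z.2, -z.1-z.2)
  invFun := fun z => (-z.1-z.2, z.1)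
  left_inv := by intro z; obtain ⟨a, b⟩ := z; rw [Prod.ext_iff]; constructor <;> dsimp <;> ring
  right_inv := by intro z; obtain ⟨a, b⟩ := z; rw [Prod.ext_iff]; constructor <;> dsimp <;> ring
  map_add' := by
    intro a b; rw [Prod.ext_iff]
    constructor <;> simp only [Prod.fst_add, Prod.snd_add] <;> ring

@[simp] lemma rhoE_apply (z : P) : rhoE z = (z.2, -z.1-z.2) := rfl
@[simp] lemma rhoE_symm_apply (z : P) : rhoE.symm z = (-z.1-z.2, z.1) := rfl

def negE : P ≃+ P where
  toFun := fun z => -z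
  invFun := fun z => -z
  left_inv := by intro z; simp
  right_inv := by intro z; simp
  map_add' := by intro a b; rw [Prod.ext_iff]; constructor <;> dsimp <;> ring

@[simp] lemma negE_apply (z : P) : negE z = -z := rfl
@[simp] lemma negE_symm_apply (z : P) : negE.symm z = -z := rfl

lemma nbr_image (g : P ≃+ P) {N : Set P} (hN : ∀ n, n ∈ N ↔ g n ∈ N) (z : P) (A : Set P) :
    {n ∈ N | g z + n ∈ (fun w => g w) '' A} = (fun w => g w) '' {n ∈ N | z + n ∈ A} := by
  ext n
  constructor
  · rintro ⟨hn, w, hw, hw'⟩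
    refine ⟨g.symm n, ⟨(hN _).2 (by simpa using hn), ?_⟩, by simp⟩
    have : z + g.symm n = w := by
      apply g.injective
      rw [map_add, g.apply_symm_apply]
      exact hw'.symm
    rwa [this]
  · rintro ⟨m, ⟨hm, hmA⟩, rfl⟩
    exact ⟨(hN m).1 hm, ⟨z + m, hmA, by exact map_add g z m⟩⟩

lemma stepZ_image (g : P ≃+ P) {N : Set P} (hN : ∀ n, n ∈ N ↔ g n ∈ N) (r : ℕ) (A : Set P) :
    stepZ N r ((fun w => g w) '' A) = (fun w => g w) '' stepZ N r A := by
  unfold stepZ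
  rw [image_union]
  congr 1
  ext w
  obtain ⟨z, rfl⟩ := g.surjective w
  simp only [mem_setOf_eq]
  rw [nbr_image g hN, Set.ncard_image_of_injective _ g.injective]
  constructor
  · intro h; exact ⟨z, h, rfl⟩
  · rintro ⟨z', h, hz'⟩
    have : z' = z := g.injective hz'
    rwa [this] at h

lemma clZ_image (g : P ≃+ P) {N : Set P} (hN : ∀ n, n ∈ N ↔ g n ∈ N) (r : ℕ) (A : Set P) :
    clZ N r ((fun w => g w) '' A) = (fun w => g w) '' clZ N r A := by
  unfold clZ
  rw [image_iUnion]
  refine iUnion_congr fun t => ?_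
  induction t with
  | zero => rfl
  | succ t ih =>
    rw [Function.iterate_succ_apply', Function.iterate_succ_apply', ih, stepZ_image g hN]

lemma rho_ntri (n : P) : n ∈ NtriZ ↔ rhoE n ∈ NtriZ := by
  simp only [NtriZ, mem_insert_iff, mem_singleton_iff, rhoE_apply, Prod.ext_iff]
  constructor <;> intro h <;> rcases h with h|h|h|h|h|h|h <;> simp_all <;> omega

lemma neg_ntri (n : P) : n ∈ NtriZ ↔ negE n ∈ NtriZ := by
  simp only [NtriZ, mem_insert_iff, mem_singleton_iff, negE_apply, Prod.ext_iff, Prod.fst_neg,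
    Prod.snd_neg]
  constructor <;> intro h <;> rcases h with h|h|h|h|h|h|h <;> simp_all <;> omega

lemma rho_hex_image (u₁ u₂ u₃ u₄ u₅ u₆ : ℤ) :
    (fun w => rhoE w) '' HexZ u₁ u₂ u₃ u₄ u₅ u₆ = HexZ u₃ u₄ u₆ u₅ u₂ u₁ := by
  ext w
  constructor
  · rintro ⟨z, hz, rfl⟩
    simp only [HexZ, mem_setOf_eq, rhoE_apply] at hz ⊢
    omega
  · intro hw
    refine ⟨rhoE.symm w, ?_, by exact rhoE.apply_symm_apply w⟩
    simp only [HexZ, mem_setOf_eq, rhoE_symm_apply] at hw ⊢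
    omega

lemma rho_symm_hex_image (u₁ u₂ u₃ u₄ u₅ u₆ : ℤ) :
    (fun w => rhoE.symm w) '' HexZ u₁ u₂ u₃ u₄ u₅ u₆ = HexZ u₆ u₅ u₁ u₂ u₄ u₃ := by
  ext w
  constructor
  · rintro ⟨z, hz, rfl⟩
    simp only [HexZ, mem_setOf_eq, rhoE_symm_apply] at hz ⊢
    omega
  · intro hw
    refine ⟨rhoE w, ?_, by exact rhoE.symm_apply_apply w⟩
    simp only [HexZ, mem_setOf_eq, rhoE_apply] at hw ⊢
    omega

lemma neg_hex_image (u₁ u₂ u₃ u₄ u₅ u₆ : ℤ) :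
    (fun w => negE w) '' HexZ u₁ u₂ u₃ u₄ u₅ u₆ = HexZ u₂ u₁ u₄ u₃ u₆ u₅ := by
  ext w
  constructor
  · rintro ⟨z, hz, rfl⟩
    simp only [HexZ, mem_setOf_eq, negE_apply, Prod.fst_neg, Prod.snd_neg] at hz ⊢
    omega
  · intro hw
    refine ⟨negE w, ?_, by exact neg_neg w⟩
    simp only [HexZ, mem_setOf_eq, negE_apply, Prod.fst_neg, Prod.snd_neg] at hw ⊢
    omega

lemma transfer_rho (k : P) (h : PmainT (rhoE k)) : PmainT k := by
  intro u₁ u₂ u₃ u₄ u₅ u₆ y hy h1 h2 h3 h4 h5 h6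
  have hy' : rhoE y ∈ HexZ u₃ u₄ u₆ u₅ u₂ u₁ := by
    rw [← rho_hex_image]; exact ⟨y, hy, rfl⟩
  have H := h u₃ u₄ u₆ u₅ u₂ u₁ (rhoE y) hy'
    (by obtain ⟨z, hz, hz'⟩ := h3; exact ⟨rhoE z, by rw [← rho_hex_image]; exact ⟨z, hz, rfl⟩, by simpa using hz'⟩)
    (by obtain ⟨z, hz, hz'⟩ := h4; exact ⟨rhoE z, by rw [← rho_hex_image]; exact ⟨z, hz, rfl⟩, by simp; omega⟩)
    (by obtain ⟨z, hz, hz'⟩ := h6; exact ⟨rhoE z, by rw [← rho_hex_image]; exact ⟨z, hz, rfl⟩, by simp; omega⟩)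
    (by obtain ⟨z, hz, hz'⟩ := h5; exact ⟨rhoE z, by rw [← rho_hex_image]; exact ⟨z, hz, rfl⟩, by simp; omega⟩)
    (by obtain ⟨z, hz, hz'⟩ := h2; exact ⟨rhoE z, by rw [← rho_hex_image]; exact ⟨z, hz, rfl⟩, by simp; omega⟩)
    (by obtain ⟨z, hz, hz'⟩ := h1; exact ⟨rhoE z, by rw [← rho_hex_image]; exact ⟨z, hz, rfl⟩, by simp; omega⟩)
  rw [show rhoE y + rhoE k = rhoE (y + k) from (map_add rhoE y k).symm] at H
  rw [show HexZ u₃ u₄ u₆ u₅ u₂ u₁ ∪ {rhoE (y+k)} =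
        (fun w => rhoE w) '' (HexZ u₁ u₂ u₃ u₄ u₅ u₆ ∪ {y + k}) by
      rw [image_union, rho_hex_image, image_singleton]] at H
  rw [clZ_image rhoE rho_ntri] at H
  have H2 := congrArg (fun S => (fun w => rhoE.symm w) '' S) H
  simp only [image_image, rhoE.symm_apply_apply, image_id'] at H2
  rw [rho_symm_hex_image] at H2
  rw [H2]
  have e1 : (rhoE (y+k)).1 = (y+k).2 := rfl
  have e2 : (rhoE (y+k)).2 = -(y+k).1 - (y+k).2 := rfl
  rw [e1, e2,
    show u₁ ⊔ -((y + k).2 + (-(y + k).1 - (y + k).2)) = u₁ ⊔ (y+k).1 by omega,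
    show u₂ ⊔ ((y + k).2 + (-(y + k).1 - (y + k).2)) = u₂ ⊔ -(y+k).1 by omega,
    show u₅ ⊔ -(-(y + k).1 - (y + k).2) = u₅ ⊔ ((y+k).1 + (y+k).2) by omega,
    show u₆ ⊔ (-(y + k).1 - (y + k).2) = u₆ ⊔ -((y+k).1 + (y+k).2) by omega]

lemma transfer_neg (k : P) (h : PmainT (negE k)) : PmainT k := by
  intro u₁ u₂ u₃ u₄ u₅ u₆ y hy h1 h2 h3 h4 h5 h6
  have hy' : negE y ∈ HexZ u₂ u₁ u₄ u₃ u₆ u₅ := by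
    rw [← neg_hex_image]; exact ⟨y, hy, rfl⟩
  have H := h u₂ u₁ u₄ u₃ u₆ u₅ (negE y) hy'
    (by obtain ⟨z, hz, hz'⟩ := h2; exact ⟨negE z, by rw [← neg_hex_image]; exact ⟨z, hz, rfl⟩, by simp; omega⟩)
    (by obtain ⟨z, hz, hz'⟩ := h1; exact ⟨negE z, by rw [← neg_hex_image]; exact ⟨z, hz, rfl⟩, by simp; omega⟩)
    (by obtain ⟨z, hz, hz'⟩ := h4; exact ⟨negE z, by rw [← neg_hex_image]; exact ⟨z, hz, rfl⟩, by simp; omega⟩)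
    (by obtain ⟨z, hz, hz'⟩ := h3; exact ⟨negE z, by rw [← neg_hex_image]; exact ⟨z, hz, rfl⟩, by simp; omega⟩)
    (by obtain ⟨z, hz, hz'⟩ := h6; exact ⟨negE z, by rw [← neg_hex_image]; exact ⟨z, hz, rfl⟩, by simp; omega⟩)
    (by obtain ⟨z, hz, hz'⟩ := h5; exact ⟨negE z, by rw [← neg_hex_image]; exact ⟨z, hz, rfl⟩, by simp; omega⟩)
  rw [show negE y + negE k = negE (y + k) from (map_add negE y k).symm] at H
  rw [show HexZ u₂ u₁ u₄ u₃ u₆ u₅ ∪ {negE (y+k)} =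
        (fun w => negE w) '' (HexZ u₁ u₂ u₃ u₄ u₅ u₆ ∪ {y + k}) by
      rw [image_union, neg_hex_image, image_singleton]] at H
  rw [clZ_image negE neg_ntri] at H
  have H2 := congrArg (fun S => (fun w => negE.symm w) '' S) H
  simp only [image_image, negE.symm_apply_apply, image_id'] at H2
  rw [show (fun w : P => negE.symm w) = (fun w : P => negE w) from rfl] at H2
  rw [neg_hex_image] at H2
  rw [H2]
  have e1 : (negE (y+k)).1 = -(y+k).1 := rfl
  have e2 : (negE (y+k)).2 = -(y+k).2 := rfl
  rw [e1, e2,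
    show u₁ ⊔ - -(y + k).1 = u₁ ⊔ (y+k).1 by omega,
    show u₃ ⊔ - -(y + k).2 = u₃ ⊔ (y+k).2 by omega,
    show u₅ ⊔ -(-(y + k).1 + -(y + k).2) = u₅ ⊔ ((y+k).1 + (y+k).2) by omega,
    show u₆ ⊔ (-(y + k).1 + -(y + k).2) = u₆ ⊔ -((y+k).1 + (y+k).2) by omega]

lemma PmainT_all (k : P) (hk : k ∈ NtriZ) (hk0 : k ≠ 0) : PmainT k := by
  have P10 : PmainT (1,0) := coreTri
  have Pm11 : PmainT (-1,1) := transfer_rho _ (by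
    rw [show rhoE ((-1,1) : P) = ((1,0) : P) by rw [Prod.ext_iff]; norm_num]; exact P10)
  have P0m1 : PmainT (0,-1) := transfer_rho _ (by
    rw [show rhoE ((0,-1) : P) = ((-1,1) : P) by rw [Prod.ext_iff]; norm_num]; exact Pm11)
  have Pm10 : PmainT (-1,0) := transfer_neg _ (by
    rw [show negE ((-1,0) : P) = ((1,0) : P) by rw [Prod.ext_iff]; norm_num]; exact P10)
  have P1m1 : PmainT (1,-1) := transfer_neg _ (by
    rw [show negE ((1,-1) : P) = ((-1,1) : P) by rw [Prod.ext_iff]; norm_num]; exact Pm11)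
  have P01 : PmainT (0,1) := transfer_neg _ (by
    rw [show negE ((0,1) : P) = ((0,-1) : P) by rw [Prod.ext_iff]; norm_num]; exact P0m1)
  simp only [NtriZ, mem_insert_iff, mem_singleton_iff] at hk
  rcases hk with rfl|rfl|rfl|rfl|rfl|rfl|rfl
  · exact absurd rfl hk0
  all_goals assumption

-- Square model
lemma colDownSq {u₁ u₂ u₃ u₄ : ℤ} {x : P}
    (hx1 : x.1 = u₁ + 1) (hx3 : x.2 ≤ u₃) (hAA : -u₂ ≤ u₁) :
    ∀ m : ℕ, ∀ j : ℤ, j = x.2 - m → -j ≤ u₄ →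
      ((u₁ + 1, j) : P) ∈ clZ NsqZ 2 (RectZ u₁ u₂ u₃ u₄ ∪ {x}) := by
  intro m
  induction m with
  | zero =>
    intro j hj _
    have : ((u₁ + 1, j) : P) = x := by
      rw [Prod.ext_iff]; constructor <;> simp <;> omega
    rw [this]
    exact subset_clZ _ _ _ (Or.inr rfl)
  | succ m ih =>
    intro j hj h4
    push_cast at hj
    apply infect2 (a := (0,1)) (b := (-1,0))
    · simp [NsqZ]
    · simp [NsqZ]
    · decide
    · have e : ((u₁ + 1, j) : P) + (0,1) = ((u₁ + 1, j + 1) : P) := by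
        simp [Prod.ext_iff]
      rw [e]
      exact ih (j+1) (by omega) (by omega)
    · refine subset_clZ _ _ _ (Or.inl ?_)
      simp [RectZ, Prod.mk_add_mk]
      omega

lemma colUpSq {u₁ u₂ u₃ u₄ : ℤ} {x : P}
    (hx1 : x.1 = u₁ + 1) (hx4 : -x.2 ≤ u₄) (hAA : -u₂ ≤ u₁) :
    ∀ m : ℕ, ∀ j : ℤ, j = x.2 + m → j ≤ u₃ →
      ((u₁ + 1, j) : P) ∈ clZ NsqZ 2 (RectZ u₁ u₂ u₃ u₄ ∪ {x}) := by
  intro m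
  induction m with
  | zero =>
    intro j hj _
    have : ((u₁ + 1, j) : P) = x := by
      rw [Prod.ext_iff]; constructor <;> simp <;> omega
    rw [this]
    exact subset_clZ _ _ _ (Or.inr rfl)
  | succ m ih =>
    intro j hj h3
    push_cast at hj
    apply infect2 (a := (0,-1)) (b := (-1,0))
    · simp [NsqZ]
    · simp [NsqZ]
    · decide
    · have e : ((u₁ + 1, j) : P) + (0,-1) = ((u₁ + 1, j - 1) : P) := by
        simp [Prod.ext_iff]; try omega
      rw [e]
      exact ih (j-1) (by omega) (by omega)
    · refine subset_clZ _ _ _ (Or.inl ?_)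
      simp [RectZ, Prod.mk_add_mk]
      omega

def PmainS (k : P) : Prop :=
  ∀ u₁ u₂ u₃ u₄ : ℤ, ∀ y : P,
    y ∈ RectZ u₁ u₂ u₃ u₄ →
    clZ NsqZ 2 (RectZ u₁ u₂ u₃ u₄ ∪ {y + k}) =
      RectZ (max u₁ (y+k).1) (max u₂ (-(y+k).1)) (max u₃ (y+k).2) (max u₄ (-(y+k).2))

lemma rectZ_mono {u₁ u₂ u₃ u₄ v₁ v₂ v₃ v₄ : ℤ} (h1 : u₁ ≤ v₁) (h2 : u₂ ≤ v₂)
    (h3 : u₃ ≤ v₃) (h4 : u₄ ≤ v₄) :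
    RectZ u₁ u₂ u₃ u₄ ⊆ RectZ v₁ v₂ v₃ v₄ := by
  intro z hz
  simp only [RectZ, mem_setOf_eq] at hz ⊢
  omega

lemma coreSq : PmainS (1, 0) := by
  intro u₁ u₂ u₃ u₄ y hy
  set x : P := y + (1,0) with hxdef
  have hx1 : x.1 = y.1 + 1 := rfl
  have hx2 : x.2 = y.2 := by simp [hxdef]
  simp only [RectZ, mem_setOf_eq] at hy
  rw [show max u₂ (-x.1) = u₂ by omega, show max u₃ x.2 = u₃ by omega,
      show max u₄ (-x.2) = u₄ by omega]
  have hub : clZ NsqZ 2 (RectZ u₁ u₂ u₃ u₄ ∪ {x}) ⊆ RectZ (max u₁ x.1) u₂ u₃ u₄ := by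
    refine clZ_subset _ _ NsqZ_finite (rect_stable (subset_refl _)) ?_
    rintro z (hz | rfl)
    · exact rectZ_mono (le_max_left _ _) le_rfl le_rfl le_rfl hz
    · simp only [RectZ, mem_setOf_eq]
      refine ⟨by omega, by omega, by omega, by omega⟩
  have hD : RectZ u₁ u₂ u₃ u₄ ⊆ clZ NsqZ 2 (RectZ u₁ u₂ u₃ u₄ ∪ {x}) :=
    fun w hw => subset_clZ _ _ _ (Or.inl hw)
  refine subset_antisymm hub ?_
  intro z hz
  simp only [RectZ, mem_setOf_eq] at hz
  by_cases hzD : z ∈ RectZ u₁ u₂ u₃ u₄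
  · exact hD hzD
  simp only [RectZ, mem_setOf_eq, not_and_or, not_le] at hzD
  have hv : z.1 = u₁ + 1 := by omega
  have hxx1 : x.1 = u₁ + 1 := by omega
  have hz' : z = ((z.1, z.2) : P) := by ext <;> simp
  rcases le_or_gt z.2 x.2 with hle | hlt
  · rw [hz', hv]
    exact colDownSq hxx1 (by omega) (by omega) (x.2 - z.2).toNat z.2 (by omega) (by omega)
  · rw [hz', hv]
    exact colUpSq hxx1 (by omega) (by omega) (z.2 - x.2).toNat z.2 (by omega) (by omega)

def rotE : P ≃+ P where
  toFun := fun z => (-z.2, z.1)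
  invFun := fun z => (z.2, -z.1)
  left_inv := by intro z; obtain ⟨a, b⟩ := z; rw [Prod.ext_iff]; constructor <;> dsimp <;> ring
  right_inv := by intro z; obtain ⟨a, b⟩ := z; rw [Prod.ext_iff]; constructor <;> dsimp <;> ring
  map_add' := by
    intro a b; rw [Prod.ext_iff]
    constructor <;> simp only [Prod.fst_add, Prod.snd_add] <;> ring

@[simp] lemma rotE_apply (z : P) : rotE z = (-z.2, z.1) := rfl
@[simp] lemma rotE_symm_apply (z : P) : rotE.symm z = (z.2, -z.1) := rfl

lemma rot_nsq (n : P) : n ∈ NsqZ ↔ rotE n ∈ NsqZ := by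
  simp only [NsqZ, mem_insert_iff, mem_singleton_iff, rotE_apply, Prod.ext_iff]
  constructor <;> intro h <;> rcases h with h|h|h|h|h <;> simp_all <;> omega

lemma rot_rect_image (u₁ u₂ u₃ u₄ : ℤ) :
    (fun w => rotE w) '' RectZ u₁ u₂ u₃ u₄ = RectZ u₄ u₃ u₁ u₂ := by
  ext w
  constructor
  · rintro ⟨z, hz, rfl⟩
    simp only [RectZ, mem_setOf_eq, rotE_apply] at hz ⊢
    omega
  · intro hw
    refine ⟨rotE.symm w, ?_, by exact rotE.apply_symm_apply w⟩
    simp only [RectZ, mem_setOf_eq, rotE_symm_apply] at hw ⊢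
    omega

lemma rot_symm_rect_image (u₁ u₂ u₃ u₄ : ℤ) :
    (fun w => rotE.symm w) '' RectZ u₁ u₂ u₃ u₄ = RectZ u₃ u₄ u₂ u₁ := by
  ext w
  constructor
  · rintro ⟨z, hz, rfl⟩
    simp only [RectZ, mem_setOf_eq, rotE_symm_apply] at hz ⊢
    omega
  · intro hw
    refine ⟨rotE w, ?_, by exact rotE.symm_apply_apply w⟩
    simp only [RectZ, mem_setOf_eq, rotE_apply] at hw ⊢
    omega

lemma transfer_rot (k : P) (h : PmainS (rotE k)) : PmainS k := by
  intro u₁ u₂ u₃ u₄ y hy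
  have hy' : rotE y ∈ RectZ u₄ u₃ u₁ u₂ := by
    rw [← rot_rect_image]; exact ⟨y, hy, rfl⟩
  have H := h u₄ u₃ u₁ u₂ (rotE y) hy'
  rw [show rotE y + rotE k = rotE (y + k) from (map_add rotE y k).symm] at H
  rw [show RectZ u₄ u₃ u₁ u₂ ∪ {rotE (y+k)} =
        (fun w => rotE w) '' (RectZ u₁ u₂ u₃ u₄ ∪ {y + k}) by
      rw [image_union, rot_rect_image, image_singleton]] at H
  rw [clZ_image rotE rot_nsq] at H
  have H2 := congrArg (fun S => (fun w => rotE.symm w) '' S) H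
  simp only [image_image, rotE.symm_apply_apply, image_id'] at H2
  rw [rot_symm_rect_image] at H2
  rw [H2]
  have e1 : (rotE (y+k)).1 = -(y+k).2 := rfl
  have e2 : (rotE (y+k)).2 = (y+k).1 := rfl
  rw [e1, e2, show u₃ ⊔ - -(y + k).2 = u₃ ⊔ (y+k).2 by omega]

lemma PmainS_all (k : P) (hk : k ∈ NsqZ) (hk0 : k ≠ 0) : PmainS k := by
  have P10 : PmainS (1,0) := coreSq
  have P0m1 : PmainS (0,-1) := transfer_rot _ (by
    rw [show rotE ((0,-1) : P) = ((1,0) : P) by rw [Prod.ext_iff]; norm_num]; exact P10)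
  have Pm10 : PmainS (-1,0) := transfer_rot _ (by
    rw [show rotE ((-1,0) : P) = ((0,-1) : P) by rw [Prod.ext_iff]; norm_num]; exact P0m1)
  have P01 : PmainS (0,1) := transfer_rot _ (by
    rw [show rotE ((0,1) : P) = ((-1,0) : P) by rw [Prod.ext_iff]; norm_num]; exact Pm10)
  simp only [NsqZ, mem_insert_iff, mem_singleton_iff] at hk
  rcases hk with rfl|rfl|rfl|rfl|rfl
  · exact absurd rfl hk0
  all_goals assumption

-- tightening of hexagons
lemma hex_tighten {u₁ u₂ u₃ u₄ u₅ u₆ : ℤ} (hne : (HexZ u₁ u₂ u₃ u₄ u₅ u₆).Nonempty) :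
    ∃ v₁ v₂ v₃ v₄ v₅ v₆ : ℤ,
      HexZ u₁ u₂ u₃ u₄ u₅ u₆ = HexZ v₁ v₂ v₃ v₄ v₅ v₆ ∧
      (∃ z ∈ HexZ v₁ v₂ v₃ v₄ v₅ v₆, z.1 = v₁) ∧
      (∃ z ∈ HexZ v₁ v₂ v₃ v₄ v₅ v₆, -z.1 = v₂) ∧
      (∃ z ∈ HexZ v₁ v₂ v₃ v₄ v₅ v₆, z.2 = v₃) ∧
      (∃ z ∈ HexZ v₁ v₂ v₃ v₄ v₅ v₆, -z.2 = v₄) ∧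
      (∃ z ∈ HexZ v₁ v₂ v₃ v₄ v₅ v₆, z.1 + z.2 = v₅) ∧
      (∃ z ∈ HexZ v₁ v₂ v₃ v₄ v₅ v₆, -(z.1 + z.2) = v₆) := by
  set D := HexZ u₁ u₂ u₃ u₄ u₅ u₆ with hD
  have gen : ∀ (f : P → ℤ) (b : ℤ), (∀ z ∈ D, f z ≤ b) →
      ∃ v : ℤ, (∀ z ∈ D, f z ≤ v) ∧ (∃ z ∈ D, f z = v) := by
    intro f b hb
    obtain ⟨v, hv1, hv2⟩ := Int.exists_greatest_of_bdd
      (P := fun m => ∃ z ∈ D, f z = m)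
      ⟨b, by rintro m ⟨z, hz, rfl⟩; exact hb z hz⟩
      (by obtain ⟨z, hz⟩ := hne; exact ⟨f z, z, hz, rfl⟩)
    exact ⟨v, fun z hz => hv2 (f z) ⟨z, hz, rfl⟩, hv1⟩
  have h1 := gen (fun z => z.1) u₁ (fun z hz => hz.1)
  have h2 := gen (fun z => -z.1) u₂ (fun z hz => hz.2.1)
  have h3 := gen (fun z => z.2) u₃ (fun z hz => hz.2.2.1)
  have h4 := gen (fun z => -z.2) u₄ (fun z hz => hz.2.2.2.1)
  have h5 := gen (fun z => z.1 + z.2) u₅ (fun z hz => hz.2.2.2.2.1)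
  have h6 := gen (fun z => -(z.1 + z.2)) u₆ (fun z hz => hz.2.2.2.2.2)
  obtain ⟨v₁, hb1, ha1⟩ := h1
  obtain ⟨v₂, hb2, ha2⟩ := h2
  obtain ⟨v₃, hb3, ha3⟩ := h3
  obtain ⟨v₄, hb4, ha4⟩ := h4
  obtain ⟨v₅, hb5, ha5⟩ := h5
  obtain ⟨v₆, hb6, ha6⟩ := h6
  have hEq : D = HexZ v₁ v₂ v₃ v₄ v₅ v₆ := by
    apply subset_antisymm
    · intro z hz
      exact ⟨hb1 z hz, hb2 z hz, hb3 z hz, hb4 z hz, hb5 z hz, hb6 z hz⟩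
    · intro z hz
      obtain ⟨w1, hw1, hw1'⟩ := ha1
      have le1 : v₁ ≤ u₁ := hw1' ▸ hw1.1
      obtain ⟨w2, hw2, hw2'⟩ := ha2
      have le2 : v₂ ≤ u₂ := hw2' ▸ hw2.2.1
      obtain ⟨w3, hw3, hw3'⟩ := ha3
      have le3 : v₃ ≤ u₃ := hw3' ▸ hw3.2.2.1
      obtain ⟨w4, hw4, hw4'⟩ := ha4
      have le4 : v₄ ≤ u₄ := hw4' ▸ hw4.2.2.2.1
      obtain ⟨w5, hw5, hw5'⟩ := ha5
      have le5 : v₅ ≤ u₅ := hw5' ▸ hw5.2.2.2.2.1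
      obtain ⟨w6, hw6, hw6'⟩ := ha6
      have le6 : v₆ ≤ u₆ := hw6' ▸ hw6.2.2.2.2.2
      exact hexZ_mono le1 le2 le3 le4 le5 le6 hz
  exact ⟨v₁, v₂, v₃, v₄, v₅, v₆, hEq, hEq ▸ ha1, hEq ▸ ha2, hEq ▸ ha3, hEq ▸ ha4,
    hEq ▸ ha5, hEq ▸ ha6⟩

-- Bridge to the plane

@[simp] lemma pt_apply0 (a b : ℝ) : pt a b 0 = a := by simp [pt]
@[simp] lemma pt_apply1 (a b : ℝ) : pt a b 1 = b := by simp [pt]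

lemma pt_inj {a b c d : ℝ} : pt a b = pt c d ↔ a = c ∧ b = d := by
  constructor
  · intro h
    exact ⟨by simpa using congrArg (fun x : E => x 0) h,
           by simpa using congrArg (fun x : E => x 1) h⟩
  · rintro ⟨rfl, rfl⟩; rfl

lemma pt_add (a b c d : ℝ) : pt a b + pt c d = pt (a+c) (b+d) := by
  have : ∀ (x y : E), (∀ i, x i = y i) → x = y := fun x y h => PiLp.ext h
  apply this
  intro i
  fin_cases i <;> simp [pt]

lemma inner_pt (a b c d : ℝ) : (inner ℝ (pt a b) (pt c d) : ℝ) = a*c + b*d := by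
  simp [PiLp.inner_apply, Fin.sum_univ_two, RCLike.inner_apply]; ring

def emb (z : P) : E := pt z.1 z.2

lemma emb_inj : Function.Injective emb := by
  intro a b h
  unfold emb at h
  rw [pt_inj] at h
  rw [Prod.ext_iff]
  exact_mod_cast h

lemma emb_add (a b : P) : emb (a + b) = emb a + emb b := by
  unfold emb
  rw [pt_add, pt_inj]
  constructor <;> push_cast [Prod.fst_add, Prod.snd_add] <;> ring

lemma latt_eq : latt = Set.range emb := by
  ext w
  constructor
  · rintro ⟨a, b, rfl⟩; exact ⟨(a, b), rfl⟩
  · rintro ⟨⟨a, b⟩, rfl⟩; exact ⟨a, b, rfl⟩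

lemma count_eq (z : P) (N A : Set P) :
    (((fun k => emb z + k) '' (emb '' N)) ∩ (emb '' A)).ncard = {n ∈ N | z + n ∈ A}.ncard := by
  have h1 : ((fun k => emb z + k) '' (emb '' N)) ∩ (emb '' A)
      = emb '' ((fun n => z + n) '' {n ∈ N | z + n ∈ A}) := by
    ext w
    constructor
    · rintro ⟨⟨k, ⟨n, hn, rfl⟩, rfl⟩, m, hmA, hme⟩
      have hw : emb z + emb n = emb (z + n) := (emb_add z n).symm
      have hm : m = z + n := emb_inj (hme.trans hw)
      subst hm
      exact ⟨z + n, ⟨n, ⟨hn, hmA⟩, rfl⟩, hw.symm⟩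
    · rintro ⟨m, ⟨n, ⟨hn, hnA⟩, rfl⟩, rfl⟩
      exact ⟨⟨emb n, ⟨n, hn, rfl⟩, (emb_add z n).symm⟩, ⟨z + n, hnA, rfl⟩⟩
  rw [h1, Set.ncard_image_of_injective _ emb_inj,
    Set.ncard_image_of_injective _ (add_right_injective z)]

lemma step_emb (N : Set P) (r : ℕ) (A : Set P) :
    step (emb '' N) r (emb '' A) = emb '' stepZ N r A := by
  unfold step stepZ
  rw [image_union]
  congr 1
  ext w
  constructor
  · rintro ⟨hlatt, hcnt⟩
    rw [latt_eq] at hlatt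
    obtain ⟨z, rfl⟩ := hlatt
    rw [count_eq] at hcnt
    exact ⟨z, hcnt, rfl⟩
  · rintro ⟨z, hz, rfl⟩
    refine ⟨by rw [latt_eq]; exact ⟨z, rfl⟩, ?_⟩
    rw [count_eq]
    exact hz

lemma bpCl_emb (N : Set P) (r : ℕ) (A : Set P) :
    bpCl (emb '' N) r (emb '' A) = emb '' clZ N r A := by
  unfold bpCl clZ
  have h0 : emb '' A ∩ latt = emb '' A := by
    rw [latt_eq]
    exact inter_eq_left.mpr (image_subset_range _ _)
  rw [h0, image_iUnion]
  refine iUnion_congr fun t => ?_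
  induction t with
  | zero => rfl
  | succ t ih =>
    rw [Function.iterate_succ_apply', Function.iterate_succ_apply', ih, step_emb]

lemma Ksq_eq : Ksq = emb '' NsqZ := by
  unfold Ksq NsqZ
  simp only [Set.image_insert_eq, Set.image_singleton, emb]
  norm_num

lemma Ktri_eq : Ktri = emb '' NtriZ := by
  unfold Ktri Ksq NtriZ
  simp only [Set.image_insert_eq, Set.image_singleton, emb]
  rw [Set.union_comm]
  simp only [Set.union_insert, Set.union_singleton]
  norm_num

lemma mem_latt_emb (z : P) : emb z ∈ latt := ⟨z.1, z.2, rfl⟩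

lemma inner_emb (z : P) (c d : ℝ) : (inner ℝ (emb z) (pt c d) : ℝ) = z.1 * c + z.2 * d :=
  inner_pt _ _ _ _

lemma decode_sq {D : Set E} (h : IsDropletS Ssq D) :
    ∃ u₁ u₂ u₃ u₄ : ℤ, D = emb '' RectZ u₁ u₂ u₃ u₄ := by
  obtain ⟨l, rfl⟩ := h
  refine ⟨⌊l (pt 1 0)⌋, ⌊l (pt (-1) 0)⌋, ⌊l (pt 0 1)⌋, ⌊l (pt 0 (-1))⌋, ?_⟩
  ext w
  constructor
  · rintro ⟨⟨a, b, rfl⟩, hw⟩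
    rw [Set.mem_iInter₂] at hw
    have h1 := hw (pt 1 0) (by simp [Ssq])
    have h2 := hw (pt (-1) 0) (by simp [Ssq])
    have h3 := hw (pt 0 1) (by simp [Ssq])
    have h4 := hw (pt 0 (-1)) (by simp [Ssq])
    rw [mem_setOf_eq, inner_pt] at h1 h2 h3 h4
    refine ⟨(a, b), ⟨?_, ?_, ?_, ?_⟩, rfl⟩
    · rw [Int.le_floor]; push_cast; linarith
    · rw [Int.le_floor]; push_cast; linarith
    · rw [Int.le_floor]; push_cast; linarith
    · rw [Int.le_floor]; push_cast; linarith
  · rintro ⟨⟨a, b⟩, hz, rfl⟩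
    obtain ⟨m1, m2, m3, m4⟩ := hz
    refine ⟨mem_latt_emb _, ?_⟩
    rw [Set.mem_iInter₂]
    rintro u hu
    simp only [Ssq, mem_insert_iff, mem_singleton_iff] at hu
    rcases hu with rfl | rfl | rfl | rfl
    · rw [mem_setOf_eq, inner_emb]
      have h := Int.floor_le (α := ℝ) (l (pt 1 0))
      have m' : ((a:ℤ):ℝ) ≤ ((⌊l (pt 1 0)⌋ : ℤ) : ℝ) := by exact_mod_cast m1
      push_cast at m' ⊢; linarith
    · rw [mem_setOf_eq, inner_emb]
      have h := Int.floor_le (α := ℝ) (l (pt (-1) 0))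
      have m' : ((-a:ℤ):ℝ) ≤ ((⌊l (pt (-1) 0)⌋ : ℤ) : ℝ) := by exact_mod_cast m2
      push_cast at m' ⊢; linarith
    · rw [mem_setOf_eq, inner_emb]
      have h := Int.floor_le (α := ℝ) (l (pt 0 1))
      have m' : ((b:ℤ):ℝ) ≤ ((⌊l (pt 0 1)⌋ : ℤ) : ℝ) := by exact_mod_cast m3
      push_cast at m' ⊢; linarith
    · rw [mem_setOf_eq, inner_emb]
      have h := Int.floor_le (α := ℝ) (l (pt 0 (-1)))
      have m' : ((-b:ℤ):ℝ) ≤ ((⌊l (pt 0 (-1))⌋ : ℤ) : ℝ) := by exact_mod_cast m4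
      push_cast at m' ⊢; linarith

lemma encode_sq (u₁ u₂ u₃ u₄ : ℤ) : IsDropletS Ssq (emb '' RectZ u₁ u₂ u₃ u₄) := by
  classical
  have ne1 : pt (1:ℝ) 0 ≠ pt (-1) 0 := by rw [Ne, pt_inj]; norm_num
  have ne2 : pt (1:ℝ) 0 ≠ pt 0 1 := by rw [Ne, pt_inj]; norm_num
  have ne3 : pt (1:ℝ) 0 ≠ pt 0 (-1) := by rw [Ne, pt_inj]; norm_num
  have ne4 : pt (-1:ℝ) 0 ≠ pt 0 1 := by rw [Ne, pt_inj]; norm_num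
  have ne5 : pt (-1:ℝ) 0 ≠ pt 0 (-1) := by rw [Ne, pt_inj]; norm_num
  have ne6 : pt (0:ℝ) 1 ≠ pt 0 (-1) := by rw [Ne, pt_inj]; norm_num
  refine ⟨fun u => if u = pt 1 0 then (u₁ : ℝ) else if u = pt (-1) 0 then (u₂ : ℝ)
    else if u = pt 0 1 then (u₃ : ℝ) else (u₄ : ℝ), ?_⟩
  ext w
  constructor
  · rintro ⟨⟨a, b⟩, hz, rfl⟩
    obtain ⟨m1, m2, m3, m4⟩ := hz
    refine ⟨mem_latt_emb _, ?_⟩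
    rw [Set.mem_iInter₂]
    rintro u hu
    simp only [Ssq, mem_insert_iff, mem_singleton_iff] at hu
    rcases hu with rfl | rfl | rfl | rfl
    · rw [mem_setOf_eq, inner_emb]; dsimp only; rw [if_pos rfl]
      have m' : ((a:ℤ):ℝ) ≤ ((u₁ : ℤ) : ℝ) := by exact_mod_cast m1
      push_cast at m' ⊢; linarith
    · rw [mem_setOf_eq, inner_emb]; dsimp only; rw [if_neg (Ne.symm ne1), if_pos rfl]
      have m' : ((-a:ℤ):ℝ) ≤ ((u₂ : ℤ) : ℝ) := by exact_mod_cast m2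
      push_cast at m' ⊢; linarith
    · rw [mem_setOf_eq, inner_emb]; dsimp only
      rw [if_neg (Ne.symm ne2), if_neg (Ne.symm ne4), if_pos rfl]
      have m' : ((b:ℤ):ℝ) ≤ ((u₃ : ℤ) : ℝ) := by exact_mod_cast m3
      push_cast at m' ⊢; linarith
    · rw [mem_setOf_eq, inner_emb]; dsimp only
      rw [if_neg (Ne.symm ne3), if_neg (Ne.symm ne5), if_neg (Ne.symm ne6)]
      have m' : ((-b:ℤ):ℝ) ≤ ((u₄ : ℤ) : ℝ) := by exact_mod_cast m4
      push_cast at m' ⊢; linarith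
  · rintro ⟨⟨a, b, rfl⟩, hw⟩
    rw [Set.mem_iInter₂] at hw
    have h1 := hw (pt 1 0) (by simp [Ssq])
    have h2 := hw (pt (-1) 0) (by simp [Ssq])
    have h3 := hw (pt 0 1) (by simp [Ssq])
    have h4 := hw (pt 0 (-1)) (by simp [Ssq])
    rw [mem_setOf_eq, inner_pt] at h1 h2 h3 h4
    dsimp only at h1 h2 h3 h4
    rw [if_pos rfl] at h1
    rw [if_neg (Ne.symm ne1), if_pos rfl] at h2
    rw [if_neg (Ne.symm ne2), if_neg (Ne.symm ne4), if_pos rfl] at h3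
    rw [if_neg (Ne.symm ne3), if_neg (Ne.symm ne5), if_neg (Ne.symm ne6)] at h4
    refine ⟨(a, b), ⟨?_, ?_, ?_, ?_⟩, rfl⟩
    · exact_mod_cast (by linarith : ((a:ℤ):ℝ) ≤ ((u₁:ℤ):ℝ))
    · exact_mod_cast (by push_cast; linarith : (((-a):ℤ):ℝ) ≤ ((u₂:ℤ):ℝ))
    · exact_mod_cast (by linarith : ((b:ℤ):ℝ) ≤ ((u₃:ℤ):ℝ))
    · exact_mod_cast (by push_cast; linarith : (((-b):ℤ):ℝ) ≤ ((u₄:ℤ):ℝ))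

lemma inv_sqrt2_le (t c : ℝ) : t * (Real.sqrt 2)⁻¹ ≤ c ↔ t ≤ c * Real.sqrt 2 := by
  have hs0 : (0:ℝ) < Real.sqrt 2 := Real.sqrt_pos.mpr (by norm_num)
  have hsmul : (Real.sqrt 2)⁻¹ * Real.sqrt 2 = 1 := inv_mul_cancel₀ (ne_of_gt hs0)
  constructor
  · intro h
    calc t = t * (Real.sqrt 2)⁻¹ * Real.sqrt 2 := by rw [mul_assoc, hsmul, mul_one]
    _ ≤ c * Real.sqrt 2 := mul_le_mul_of_nonneg_right h (le_of_lt hs0)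
  · intro h
    calc t * (Real.sqrt 2)⁻¹ ≤ c * Real.sqrt 2 * (Real.sqrt 2)⁻¹ :=
          mul_le_mul_of_nonneg_right h (by positivity)
    _ = c := by rw [mul_assoc, mul_inv_cancel₀ (ne_of_gt hs0), mul_one]

lemma decode_tri {D : Set E} (h : IsDropletS Stri D) :
    ∃ u₁ u₂ u₃ u₄ u₅ u₆ : ℤ, D = emb '' HexZ u₁ u₂ u₃ u₄ u₅ u₆ := by
  obtain ⟨l, rfl⟩ := h
  set s : ℝ := (Real.sqrt 2)⁻¹ with hs
  refine ⟨⌊l (pt 1 0)⌋, ⌊l (pt (-1) 0)⌋, ⌊l (pt 0 1)⌋, ⌊l (pt 0 (-1))⌋,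
    ⌊l (pt s s) * Real.sqrt 2⌋, ⌊l (pt (-s) (-s)) * Real.sqrt 2⌋, ?_⟩
  ext w
  constructor
  · rintro ⟨⟨a, b, rfl⟩, hw⟩
    rw [Set.mem_iInter₂] at hw
    have h1 := hw (pt 1 0) (by simp [Stri, Ssq])
    have h2 := hw (pt (-1) 0) (by simp [Stri, Ssq])
    have h3 := hw (pt 0 1) (by simp [Stri, Ssq])
    have h4 := hw (pt 0 (-1)) (by simp [Stri, Ssq])
    have h5 := hw (pt s s) (by simp [Stri, hs])
    have h6 := hw (pt (-s) (-s)) (by simp [Stri, hs])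
    rw [mem_setOf_eq, inner_pt] at h1 h2 h3 h4 h5 h6
    have h5' : ((a + b : ℤ) : ℝ) ≤ l (pt s s) * Real.sqrt 2 := by
      rw [← inv_sqrt2_le]
      push_cast
      rw [← hs]
      linarith
    have h6' : ((-(a + b) : ℤ) : ℝ) ≤ l (pt (-s) (-s)) * Real.sqrt 2 := by
      rw [← inv_sqrt2_le]
      push_cast
      rw [← hs]
      linarith
    refine ⟨(a, b), ⟨?_, ?_, ?_, ?_, ?_, ?_⟩, rfl⟩
    · rw [Int.le_floor]; push_cast; linarith
    · rw [Int.le_floor]; push_cast; linarith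
    · rw [Int.le_floor]; push_cast; linarith
    · rw [Int.le_floor]; push_cast; linarith
    · exact Int.le_floor.mpr h5'
    · exact Int.le_floor.mpr h6'
  · rintro ⟨⟨a, b⟩, hz, rfl⟩
    obtain ⟨m1, m2, m3, m4, m5, m6⟩ := hz
    refine ⟨mem_latt_emb _, ?_⟩
    rw [Set.mem_iInter₂]
    rintro u hu
    simp only [Stri, Ssq, union_insert, union_singleton, mem_insert_iff, mem_singleton_iff] at hu
    rcases hu with rfl | rfl | rfl | rfl | rfl | rfl
    all_goals rw [mem_setOf_eq, inner_emb]
    · have h := Int.floor_le (α := ℝ) (l (pt s s) * Real.sqrt 2)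
      have m' : ((a + b : ℤ):ℝ) ≤ ((⌊l (pt s s) * Real.sqrt 2⌋ : ℤ) : ℝ) := by exact_mod_cast m5
      have : ((a:ℝ) + b) * (Real.sqrt 2)⁻¹ ≤ l (pt s s) := by
        rw [inv_sqrt2_le]
        push_cast at m'
        linarith
      rw [← hs] at this
      linarith [this]
    · have h := Int.floor_le (α := ℝ) (l (pt (-s) (-s)) * Real.sqrt 2)
      have m' : ((-(a + b) : ℤ):ℝ) ≤ ((⌊l (pt (-s) (-s)) * Real.sqrt 2⌋ : ℤ) : ℝ) := by
        exact_mod_cast m6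
      have : (-((a:ℝ) + b)) * (Real.sqrt 2)⁻¹ ≤ l (pt (-s) (-s)) := by
        rw [inv_sqrt2_le]
        push_cast at m'
        linarith
      rw [← hs] at this
      linarith [this]
    · have h := Int.floor_le (α := ℝ) (l (pt 1 0))
      have m' : ((a:ℤ):ℝ) ≤ ((⌊l (pt 1 0)⌋ : ℤ) : ℝ) := by exact_mod_cast m1
      push_cast at m' ⊢; linarith
    · have h := Int.floor_le (α := ℝ) (l (pt (-1) 0))
      have m' : ((-a:ℤ):ℝ) ≤ ((⌊l (pt (-1) 0)⌋ : ℤ) : ℝ) := by exact_mod_cast m2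
      push_cast at m' ⊢; linarith
    · have h := Int.floor_le (α := ℝ) (l (pt 0 1))
      have m' : ((b:ℤ):ℝ) ≤ ((⌊l (pt 0 1)⌋ : ℤ) : ℝ) := by exact_mod_cast m3
      push_cast at m' ⊢; linarith
    · have h := Int.floor_le (α := ℝ) (l (pt 0 (-1)))
      have m' : ((-b:ℤ):ℝ) ≤ ((⌊l (pt 0 (-1))⌋ : ℤ) : ℝ) := by exact_mod_cast m4
      push_cast at m' ⊢; linarith

lemma encode_tri (u₁ u₂ u₃ u₄ u₅ u₆ : ℤ) :
    IsDropletS Stri (emb '' HexZ u₁ u₂ u₃ u₄ u₅ u₆) := by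
  classical
  set s : ℝ := (Real.sqrt 2)⁻¹ with hs
  have s_pos : 0 < s := by
    rw [hs]
    exact inv_pos.mpr (Real.sqrt_pos.mpr (by norm_num))
  have ne1 : pt (1:ℝ) 0 ≠ pt (-1) 0 := by rw [Ne, pt_inj]; norm_num
  have ne2 : pt (1:ℝ) 0 ≠ pt 0 1 := by rw [Ne, pt_inj]; norm_num
  have ne3 : pt (1:ℝ) 0 ≠ pt 0 (-1) := by rw [Ne, pt_inj]; norm_num
  have ne4 : pt (-1:ℝ) 0 ≠ pt 0 1 := by rw [Ne, pt_inj]; norm_num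
  have ne5 : pt (-1:ℝ) 0 ≠ pt 0 (-1) := by rw [Ne, pt_inj]; norm_num
  have ne6 : pt (0:ℝ) 1 ≠ pt 0 (-1) := by rw [Ne, pt_inj]; norm_num
  have na1 : pt s s ≠ pt 1 0 := by rw [Ne, pt_inj]; intro h; exact absurd h.2 (by positivity)
  have na2 : pt s s ≠ pt (-1) 0 := by rw [Ne, pt_inj]; intro h; exact absurd h.2 (by positivity)
  have na3 : pt s s ≠ pt 0 1 := by rw [Ne, pt_inj]; intro h; exact absurd h.1 (by positivity)
  have na4 : pt s s ≠ pt 0 (-1) := by rw [Ne, pt_inj]; intro h; exact absurd h.1 (by positivity)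
  have nb1 : pt (-s) (-s) ≠ pt 1 0 := by
    rw [Ne, pt_inj]; intro h; have := h.2; nlinarith
  have nb2 : pt (-s) (-s) ≠ pt (-1) 0 := by
    rw [Ne, pt_inj]; intro h; have := h.2; nlinarith
  have nb3 : pt (-s) (-s) ≠ pt 0 1 := by
    rw [Ne, pt_inj]; intro h; have := h.1; nlinarith
  have nb4 : pt (-s) (-s) ≠ pt 0 (-1) := by
    rw [Ne, pt_inj]; intro h; have := h.1; nlinarith
  have nab : pt (-s) (-s) ≠ pt s s := by
    rw [Ne, pt_inj]; intro h; have := h.1; nlinarith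
  refine ⟨fun u => if u = pt 1 0 then (u₁ : ℝ) else if u = pt (-1) 0 then (u₂ : ℝ)
    else if u = pt 0 1 then (u₃ : ℝ) else if u = pt 0 (-1) then (u₄ : ℝ)
    else if u = pt s s then (u₅ : ℝ) * s else (u₆ : ℝ) * s, ?_⟩
  ext w
  constructor
  · rintro ⟨⟨a, b⟩, hz, rfl⟩
    obtain ⟨m1, m2, m3, m4, m5, m6⟩ := hz
    refine ⟨mem_latt_emb _, ?_⟩
    rw [Set.mem_iInter₂]
    rintro u hu
    simp only [Stri, Ssq, union_insert, union_singleton, mem_insert_iff, mem_singleton_iff] at hu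
    rcases hu with rfl | rfl | rfl | rfl | rfl | rfl
    all_goals rw [mem_setOf_eq, inner_emb]; dsimp only
    · rw [if_neg na1, if_neg na2, if_neg na3, if_neg na4, if_pos rfl]
      have m' : ((a + b :ℤ):ℝ) ≤ ((u₅ : ℤ) : ℝ) := by exact_mod_cast m5
      push_cast at m'
      nlinarith
    · rw [if_neg nb1, if_neg nb2, if_neg nb3, if_neg nb4, if_neg nab]
      have m' : ((-(a + b) :ℤ):ℝ) ≤ ((u₆ : ℤ) : ℝ) := by exact_mod_cast m6
      push_cast at m'
      nlinarith
    · rw [if_pos rfl]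
      have m' : ((a:ℤ):ℝ) ≤ ((u₁ : ℤ) : ℝ) := by exact_mod_cast m1
      push_cast at m' ⊢; linarith
    · rw [if_neg (Ne.symm ne1), if_pos rfl]
      have m' : ((-a:ℤ):ℝ) ≤ ((u₂ : ℤ) : ℝ) := by exact_mod_cast m2
      push_cast at m' ⊢; linarith
    · rw [if_neg (Ne.symm ne2), if_neg (Ne.symm ne4), if_pos rfl]
      have m' : ((b:ℤ):ℝ) ≤ ((u₃ : ℤ) : ℝ) := by exact_mod_cast m3
      push_cast at m' ⊢; linarith
    · rw [if_neg (Ne.symm ne3), if_neg (Ne.symm ne5), if_neg (Ne.symm ne6), if_pos rfl]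
      have m' : ((-b:ℤ):ℝ) ≤ ((u₄ : ℤ) : ℝ) := by exact_mod_cast m4
      push_cast at m' ⊢; linarith
  · rintro ⟨⟨a, b, rfl⟩, hw⟩
    rw [Set.mem_iInter₂] at hw
    have h1 := hw (pt 1 0) (by simp [Stri, Ssq])
    have h2 := hw (pt (-1) 0) (by simp [Stri, Ssq])
    have h3 := hw (pt 0 1) (by simp [Stri, Ssq])
    have h4 := hw (pt 0 (-1)) (by simp [Stri, Ssq])
    have h5 := hw (pt s s) (by simp [Stri, hs])
    have h6 := hw (pt (-s) (-s)) (by simp [Stri, hs])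
    rw [mem_setOf_eq, inner_pt] at h1 h2 h3 h4 h5 h6
    dsimp only at h1 h2 h3 h4 h5 h6
    rw [if_pos rfl] at h1
    rw [if_neg (Ne.symm ne1), if_pos rfl] at h2
    rw [if_neg (Ne.symm ne2), if_neg (Ne.symm ne4), if_pos rfl] at h3
    rw [if_neg (Ne.symm ne3), if_neg (Ne.symm ne5), if_neg (Ne.symm ne6), if_pos rfl] at h4
    rw [if_neg na1, if_neg na2, if_neg na3, if_neg na4, if_pos rfl] at h5
    rw [if_neg nb1, if_neg nb2, if_neg nb3, if_neg nb4, if_neg nab] at h6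
    have h5' : (a:ℝ) + b ≤ (u₅:ℝ) := by
      have := (mul_le_mul_iff_left₀ s_pos).mp (by linarith : ((a:ℝ) + b) * s ≤ (u₅:ℝ) * s)
      linarith
    have h6' : -((a:ℝ) + b) ≤ (u₆:ℝ) := by
      have := (mul_le_mul_iff_left₀ s_pos).mp (by linarith : (-((a:ℝ) + b)) * s ≤ (u₆:ℝ) * s)
      linarith
    refine ⟨(a, b), ⟨?_, ?_, ?_, ?_, ?_, ?_⟩, rfl⟩
    · exact_mod_cast (by linarith : ((a:ℤ):ℝ) ≤ ((u₁:ℤ):ℝ))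
    · exact_mod_cast (by push_cast; linarith : (((-a):ℤ):ℝ) ≤ ((u₂:ℤ):ℝ))
    · exact_mod_cast (by linarith : ((b:ℤ):ℝ) ≤ ((u₃:ℤ):ℝ))
    · exact_mod_cast (by push_cast; linarith : (((-b):ℤ):ℝ) ≤ ((u₄:ℤ):ℝ))
    · exact_mod_cast (by push_cast; linarith : (((a+b):ℤ):ℝ) ≤ ((u₅:ℤ):ℝ))
    · exact_mod_cast (by push_cast; linarith : ((-(a+b):ℤ):ℝ) ≤ ((u₆:ℤ):ℝ))

end

theorem statement_3 (𝒦 S : Set E) (r : ℕ)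
    (hmod : (𝒦 = Ksq ∧ r = 2 ∧ S = Ssq) ∨ (𝒦 = Ktri ∧ r = 3 ∧ S = Stri))
    (D D' : Set E) (hD : IsDropletS S D) (y : E) (hy : y ∈ D)
    (x : E) (hx : x ∈ latt) (hxy : x ≠ y) (hnb : x - y ∈ 𝒦)
    (hD' : IsDropletS S D') (hsub : D ∪ {x} ⊆ D')
    (hmin : ∀ D'' : Set E, IsDropletS S D'' → D ∪ {x} ⊆ D'' → D' ⊆ D'') :
    bpCl 𝒦 r (D ∪ {x}) = D' := by
  have emb_sub : ∀ a b : P, emb a - emb b = emb (a - b) := by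
    intro a b
    rw [eq_comm, eq_sub_iff_add_eq, ← emb_add, sub_add_cancel]
  rcases hmod with ⟨hK, hr, hS⟩ | ⟨hK, hr, hS⟩ <;> subst hK <;> subst hr <;> subst hS
  · -- square case
    obtain ⟨u₁, u₂, u₃, u₄, hDeq⟩ := decode_sq hD
    obtain ⟨v₁, v₂, v₃, v₄, hD'eq⟩ := decode_sq hD'
    rw [latt_eq] at hx
    obtain ⟨xz, rfl⟩ := hx
    subst hDeq
    subst hD'eq
    obtain ⟨yz, hyz, rfl⟩ := hy
    set k := xz - yz with hk
    have hkN : k ∈ NsqZ := by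
      have h1 : emb xz - emb yz ∈ emb '' NsqZ := by rw [← Ksq_eq]; exact hnb
      rw [emb_sub] at h1
      obtain ⟨n, hn, he⟩ := h1
      have h2 := emb_inj he
      rw [hk, ← h2]
      exact hn
    have hk0 : k ≠ 0 := by
      intro h
      apply hxy
      have : xz = yz := by rwa [hk, sub_eq_zero] at h
      rw [this]
    have hxk : xz = yz + k := by rw [hk]; abel
    have himg : (emb '' RectZ u₁ u₂ u₃ u₄) ∪ {emb xz}
        = emb '' (RectZ u₁ u₂ u₃ u₄ ∪ {xz}) := by
      rw [image_union, image_singleton]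
    have hcl := PmainS_all k hkN hk0 u₁ u₂ u₃ u₄ yz hyz
    rw [← hxk] at hcl
    have hbp : bpCl Ksq 2 ((emb '' RectZ u₁ u₂ u₃ u₄) ∪ {emb xz})
        = emb '' RectZ (max u₁ xz.1) (max u₂ (-xz.1)) (max u₃ xz.2) (max u₄ (-xz.2)) := by
      rw [himg, Ksq_eq, bpCl_emb, hcl]
    rw [hbp]
    apply subset_antisymm
    · have hsubZ : RectZ u₁ u₂ u₃ u₄ ∪ {xz} ⊆ RectZ v₁ v₂ v₃ v₄ := by
        intro z hz
        have h2 : emb z ∈ emb '' RectZ v₁ v₂ v₃ v₄ := by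
          apply hsub
          rcases hz with hz | rfl
          · exact Or.inl ⟨z, hz, rfl⟩
          · exact Or.inr rfl
        obtain ⟨w, hw, he⟩ := h2
        rwa [← emb_inj he]
      have h3 : RectZ (max u₁ xz.1) (max u₂ (-xz.1)) (max u₃ xz.2) (max u₄ (-xz.2))
          ⊆ RectZ v₁ v₂ v₃ v₄ := by
        rw [← hcl]
        exact clZ_subset _ _ NsqZ_finite (rect_stable (subset_refl _)) hsubZ
      exact image_mono h3
    · refine hmin _ (encode_sq _ _ _ _) ?_
      rw [himg, ← hbp, himg, Ksq_eq, bpCl_emb]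
      exact image_mono (subset_clZ _ _ _)
  · -- triangular case
    obtain ⟨u₁, u₂, u₃, u₄, u₅, u₆, hDeq⟩ := decode_tri hD
    obtain ⟨v₁, v₂, v₃, v₄, v₅, v₆, hD'eq⟩ := decode_tri hD'
    rw [latt_eq] at hx
    obtain ⟨xz, rfl⟩ := hx
    subst hDeq
    subst hD'eq
    obtain ⟨yz, hyz, rfl⟩ := hy
    obtain ⟨w₁, w₂, w₃, w₄, w₅, w₆, hEq, a1, a2, a3, a4, a5, a6⟩ :=
      hex_tighten ⟨yz, hyz⟩
    rw [hEq] at hyz ⊢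
    set k := xz - yz with hk
    have hkN : k ∈ NtriZ := by
      have h1 : emb xz - emb yz ∈ emb '' NtriZ := by rw [← Ktri_eq]; exact hnb
      rw [emb_sub] at h1
      obtain ⟨n, hn, he⟩ := h1
      have h2 := emb_inj he
      rw [hk, ← h2]
      exact hn
    have hk0 : k ≠ 0 := by
      intro h
      apply hxy
      have : xz = yz := by rwa [hk, sub_eq_zero] at h
      rw [this]
    have hxk : xz = yz + k := by rw [hk]; abel
    have himg : (emb '' HexZ w₁ w₂ w₃ w₄ w₅ w₆) ∪ {emb xz}
        = emb '' (HexZ w₁ w₂ w₃ w₄ w₅ w₆ ∪ {xz}) := by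
      rw [image_union, image_singleton]
    have hcl := PmainT_all k hkN hk0 w₁ w₂ w₃ w₄ w₅ w₆ yz hyz a1 a2 a3 a4 a5 a6
    rw [← hxk] at hcl
    have hbp : bpCl Ktri 3 ((emb '' HexZ w₁ w₂ w₃ w₄ w₅ w₆) ∪ {emb xz})
        = emb '' HexZ (max w₁ xz.1) (max w₂ (-xz.1)) (max w₃ xz.2) (max w₄ (-xz.2))
            (max w₅ (xz.1 + xz.2)) (max w₆ (-(xz.1 + xz.2))) := by
      rw [himg, Ktri_eq, bpCl_emb, hcl]
    rw [hbp]
    apply subset_antisymm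
    · have hsubZ : HexZ w₁ w₂ w₃ w₄ w₅ w₆ ∪ {xz} ⊆ HexZ v₁ v₂ v₃ v₄ v₅ v₆ := by
        intro z hz
        have h2 : emb z ∈ emb '' HexZ v₁ v₂ v₃ v₄ v₅ v₆ := by
          apply hsub
          rcases hz with hz | rfl
          · rw [hEq]
            exact Or.inl ⟨z, hz, rfl⟩
          · exact Or.inr rfl
        obtain ⟨w, hw, he⟩ := h2
        rwa [← emb_inj he]
      have h3 : HexZ (max w₁ xz.1) (max w₂ (-xz.1)) (max w₃ xz.2) (max w₄ (-xz.2))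
            (max w₅ (xz.1 + xz.2)) (max w₆ (-(xz.1 + xz.2))) ⊆ HexZ v₁ v₂ v₃ v₄ v₅ v₆ := by
        rw [← hcl]
        exact clZ_subset _ _ NtriZ_finite (hex_stable (subset_refl _)) hsubZ
      exact image_mono h3
    · have := hmin (emb '' HexZ (max w₁ xz.1) (max w₂ (-xz.1)) (max w₃ xz.2) (max w₄ (-xz.2))
            (max w₅ (xz.1 + xz.2)) (max w₆ (-(xz.1 + xz.2)))) (encode_tri _ _ _ _ _ _) ?_
      · exact this
      · rw [hEq, himg, ← hbp, himg, Ktri_eq, bpCl_emb]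
        exact image_mono (subset_clZ _ _ _)
end

section
/- Work with constants 1 ≪ C₆ ≪ C₅ ≪ C₄ ≪ C₃ ≪ C₂ (each sufficiently large in terms of those to its left) and s sufficiently large in terms of all of them. Let P be a fat horizontal convex set of area at least (C₂s)². Then P has an admissible vertical chord. -/
open Set MeasureTheory Filter
open scoped RealInnerProductSpace Pointwise ENNReal

section Aux9
open Real Bornology

lemma aux9_pt_eta (x : E) : pt (x 0) (x 1) = x := by
  ext i; fin_cases i <;> rfl

lemma aux9_abs_coord_le_norm (x : E) (i : Fin 2) : |x i| ≤ ‖x‖ := by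
  rw [EuclideanSpace.norm_eq, ← Real.sqrt_sq (abs_nonneg (x i))]
  apply Real.sqrt_le_sqrt
  rw [sq_abs]
  have := Finset.single_le_sum (f := fun j => ‖x j‖ ^ 2) (fun j _ => sq_nonneg _)
    (Finset.mem_univ i)
  simpa [Real.norm_eq_abs, sq_abs] using this

variable {P : Set E}

lemma aux9_bdd_coord (hbd : IsBounded P) (i : Fin 2) :
    BddAbove ((fun p : E => p i) '' P) ∧ BddBelow ((fun p : E => p i) '' P) := by
  obtain ⟨C, hC⟩ := isBounded_iff_forall_norm_le.1 hbd
  constructor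
  · exact ⟨C, fun y ⟨p, hp, hpy⟩ => hpy ▸ (le_of_abs_le ((aux9_abs_coord_le_norm p i).trans (hC p hp)))⟩
  · exact ⟨-C, fun y ⟨p, hp, hpy⟩ => hpy ▸ (neg_le_of_abs_le ((aux9_abs_coord_le_norm p i).trans (hC p hp)))⟩

lemma aux9_mem_bounds (hbd : IsBounded P) {p : E} (hp : p ∈ P) :
    xmin P ≤ p 0 ∧ p 0 ≤ xmax P ∧ ymin P ≤ p 1 ∧ p 1 ≤ ymax P := by
  refine ⟨csInf_le (aux9_bdd_coord hbd 0).2 ⟨p, hp, rfl⟩, le_csSup (aux9_bdd_coord hbd 0).1 ⟨p, hp, rfl⟩,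
    csInf_le (aux9_bdd_coord hbd 1).2 ⟨p, hp, rfl⟩, le_csSup (aux9_bdd_coord hbd 1).1 ⟨p, hp, rfl⟩⟩

lemma aux9_chord_nonempty (hconv : Convex ℝ P) (hne : P.Nonempty) {a : ℝ}
    (h1 : xmin P < a) (h2 : a < xmax P) : ∃ y, pt a y ∈ P := by
  obtain ⟨x₁, ⟨p, hp, rfl⟩, hpa⟩ := exists_lt_of_csInf_lt (hne.image _) h1
  obtain ⟨x₂, ⟨q, hq, rfl⟩, haq⟩ := exists_lt_of_lt_csSup (hne.image _) h2
  set t := (a - p 0) / (q 0 - p 0) with ht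
  have hpq : (0:ℝ) < q 0 - p 0 := by simp only at hpa haq ⊢; linarith
  have ht0 : 0 ≤ t := div_nonneg (by simp only at hpa; linarith) hpq.le
  have ht1 : t ≤ 1 := by
    rw [div_le_one hpq]; simp only at haq; linarith
  have hmem : (1 - t) • p + t • q ∈ P := hconv hp hq (by linarith) ht0 (by ring)
  have hcoord : ((1 - t) • p + t • q) 0 = a := by
    simp only [PiLp.add_apply, PiLp.smul_apply, smul_eq_mul]
    have e : t * (q 0 - p 0) = a - p 0 := by rw [ht]; exact div_mul_cancel₀ _ hpq.ne'
    linear_combination e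
  exact ⟨((1 - t) • p + t • q) 1, by rw [← hcoord, aux9_pt_eta]; exact hmem⟩

lemma aux9_upperF_bounds (hbd : IsBounded P) {a : ℝ} (h : {y : ℝ | pt a y ∈ P}.Nonempty) :
    ymin P ≤ upperF P a ∧ upperF P a ≤ ymax P := by
  obtain ⟨y0, hy0⟩ := h
  have hba : BddAbove {y : ℝ | pt a y ∈ P} :=
    ⟨ymax P, fun y hy => (aux9_mem_bounds hbd hy).2.2.2⟩
  constructor
  · exact le_trans (aux9_mem_bounds hbd hy0).2.2.1 (le_csSup hba hy0)
  · exact csSup_le ⟨y0, hy0⟩ fun y hy => (aux9_mem_bounds hbd hy).2.2.2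

lemma aux9_lowerF_bounds (hbd : IsBounded P) {a : ℝ} (h : {y : ℝ | pt a y ∈ P}.Nonempty) :
    ymin P ≤ lowerF P a ∧ lowerF P a ≤ ymax P := by
  obtain ⟨y0, hy0⟩ := h
  have hbb : BddBelow {y : ℝ | pt a y ∈ P} :=
    ⟨ymin P, fun y hy => (aux9_mem_bounds hbd hy).2.2.1⟩
  constructor
  · exact le_csInf ⟨y0, hy0⟩ fun y hy => (aux9_mem_bounds hbd hy).2.2.1
  · exact le_trans (csInf_le hbb hy0) (aux9_mem_bounds hbd hy0).2.2.2

/-- Slope bounds in the middle third. -/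
lemma aux9_slope_bound (hconv : Convex ℝ P) (hbd : IsBounded P) (hne : P.Nonempty)
    (hH : ymax P - ymin P ≤ xmax P - xmin P) (hW : 0 < xmax P - xmin P) {a : ℝ}
    (ha1 : xmin P + (xmax P - xmin P) / 3 ≤ a) (ha2 : a ≤ xmax P - (xmax P - xmin P) / 3) :
    (∀ m ∈ upperSlopes P a, |m| ≤ 32 / 10) ∧ (∀ m ∈ lowerSlopes P a, |m| ≤ 32 / 10) := by
  set W := xmax P - xmin P with hWdef
  set H := ymax P - ymin P with hHdef
  obtain ⟨x₁, ⟨p, hp, rfl⟩, hpa⟩ := exists_lt_of_csInf_lt (hne.image (fun p : E => p 0))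
    (show xmin P < xmin P + W / 100 by linarith)
  obtain ⟨x₂, ⟨q, hq, rfl⟩, haq⟩ := exists_lt_of_lt_csSup (hne.image (fun p : E => p 0))
    (show xmax P - W / 100 < xmax P by linarith)
  simp only at hpa haq
  have hpc : {y : ℝ | pt (p 0) y ∈ P}.Nonempty := ⟨p 1, by rw [mem_setOf_eq, aux9_pt_eta]; exact hp⟩
  have hqc : {y : ℝ | pt (q 0) y ∈ P}.Nonempty := ⟨q 1, by rw [mem_setOf_eq, aux9_pt_eta]; exact hq⟩
  have hac : {y : ℝ | pt a y ∈ P}.Nonempty :=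
    aux9_chord_nonempty (a := a) hconv hne (by linarith) (by linarith)
  have hH0 : 0 ≤ H := by
    obtain ⟨r, hr⟩ := hne
    have := aux9_mem_bounds hbd hr; rw [hHdef]; linarith [this.2.2.1, this.2.2.2]
  have hpa' : W * (97 / 300) ≤ a - p 0 := by linarith
  have haq' : W * (97 / 300) ≤ q 0 - a := by linarith
  constructor
  · intro m hm
    have h1 := hm (p 0) hpc
    have h2 := hm (q 0) hqc
    rw [abs_le]
    constructor
    · nlinarith [(aux9_upperF_bounds hbd hqc).1, (aux9_upperF_bounds hbd hqc).2, (aux9_upperF_bounds hbd hac).1, (aux9_upperF_bounds hbd hac).2]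
    · nlinarith [(aux9_upperF_bounds hbd hpc).1, (aux9_upperF_bounds hbd hpc).2, (aux9_upperF_bounds hbd hac).1, (aux9_upperF_bounds hbd hac).2]
  · intro m hm
    have h1 := hm (p 0) hpc
    have h2 := hm (q 0) hqc
    rw [abs_le]
    constructor
    · nlinarith [(aux9_lowerF_bounds hbd hpc).1, (aux9_lowerF_bounds hbd hpc).2, (aux9_lowerF_bounds hbd hac).1, (aux9_lowerF_bounds hbd hac).2]
    · nlinarith [(aux9_lowerF_bounds hbd hqc).1, (aux9_lowerF_bounds hbd hqc).2, (aux9_lowerF_bounds hbd hac).1, (aux9_lowerF_bounds hbd hac).2]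

lemma aux9_upper_slopes_anti {x y m₁ m₂ : ℝ} (hxy : x < y)
    (hx : {z : ℝ | pt x z ∈ P}.Nonempty) (hy : {z : ℝ | pt y z ∈ P}.Nonempty)
    (h₁ : m₁ ∈ upperSlopes P x) (h₂ : m₂ ∈ upperSlopes P y) : m₂ ≤ m₁ := by
  have a1 := h₁ y hy
  have a2 := h₂ x hx
  nlinarith

lemma aux9_lower_slopes_mono {x y m₁ m₂ : ℝ} (hxy : x < y)
    (hx : {z : ℝ | pt x z ∈ P}.Nonempty) (hy : {z : ℝ | pt y z ∈ P}.Nonempty)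
    (h₁ : m₁ ∈ lowerSlopes P x) (h₂ : m₂ ∈ lowerSlopes P y) : m₁ ≤ m₂ := by
  have a1 := h₁ y hy
  have a2 := h₂ x hx
  nlinarith
lemma aux9_card_bound (S : Finset ℕ) (g : ℕ → ℝ) {d : ℝ} (hd : 0 < d)
    (hg : ∀ i ∈ S, ∀ j ∈ S, i < j → g j ≤ g i - d)
    (hB : ∀ i ∈ S, |g i| ≤ π / 2) : (S.card : ℝ) ≤ π / d + 2 := by
  classical
  set h : ℕ → ℤ := fun i => ⌈(π / 2 - g i) / d⌉ with hh
  have hmono : ∀ i ∈ S, ∀ j ∈ S, i < j → h i < h j := by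
    intro i hi j hj hij
    have h1 := hg i hi j hj hij
    have h2 : (π / 2 - g i) / d + 1 ≤ (π / 2 - g j) / d := by
      rw [div_add' _ _ _ hd.ne', div_le_div_iff₀ hd hd]
      nlinarith
    calc h i < h i + 1 := lt_add_one _
      _ = ⌈(π / 2 - g i) / d + 1⌉ := by rw [Int.ceil_add_one]
      _ ≤ h j := Int.ceil_le_ceil h2
  have hmaps : ∀ i ∈ S, h i ∈ Finset.Icc (0 : ℤ) ⌈π / d⌉ := by
    intro i hi
    have hb := abs_le.1 (hB i hi)
    rw [Finset.mem_Icc]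
    refine ⟨Int.ceil_nonneg (div_nonneg (by linarith [hb.2]) hd.le), Int.ceil_le_ceil ?_⟩
    gcongr
    linarith [hb.1]
  have hinj : Set.InjOn h S := by
    intro i hi j hj hij
    rcases lt_trichotomy i j with h' | h' | h'
    · exact absurd hij (ne_of_lt (hmono i (Finset.mem_coe.1 hi) j (Finset.mem_coe.1 hj) h'))
    · exact h'
    · exact absurd hij.symm (ne_of_lt (hmono j (Finset.mem_coe.1 hj) i (Finset.mem_coe.1 hi) h'))
  have hcard := Finset.card_le_card_of_injOn h hmaps hinj
  have hIcc : (Finset.Icc (0 : ℤ) ⌈π / d⌉).card = (⌈π / d⌉ + 1).toNat := by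
    rw [Int.card_Icc]; norm_num
  have hceil : (⌈π / d⌉ : ℝ) < π / d + 1 := Int.ceil_lt_add_one _
  have hnn : (0 : ℤ) ≤ ⌈π / d⌉ + 1 := by
    have : (0:ℤ) ≤ ⌈π / d⌉ := Int.ceil_nonneg (div_nonneg pi_pos.le hd.le)
    omega
  have : (S.card : ℝ) ≤ ((⌈π / d⌉ + 1).toNat : ℝ) := by
    rw [hIcc] at hcard; exact_mod_cast hcard
  rw [show ((⌈π / d⌉ + 1).toNat : ℝ) = ((⌈π / d⌉ : ℝ) + 1) by
    exact_mod_cast congrArg (fun z : ℤ => (z : ℝ)) (Int.toNat_of_nonneg hnn)] at this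
  linarith
lemma aux9_arctan_bound {m : ℝ} (hm : |m| ≤ 32 / 10) : |arctan m| ≤ 4 * π / 9 := by
  have hpi3 : 3 < π := pi_gt_three
  have hpi4 : π < 3.15 := pi_lt_d2
  have key : (32 : ℝ) / 10 ≤ tan (4 * π / 9) := by
    have h49 : (4 : ℝ) * π / 9 = π / 2 - π / 18 := by ring
    have hs : sin (4 * π / 9) = cos (π / 18) := by rw [h49, sin_pi_div_two_sub]
    have hc : cos (4 * π / 9) = sin (π / 18) := by rw [h49, cos_pi_div_two_sub]
    have h1 : Real.sqrt 2 / 2 ≤ cos (π / 18) := by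
      rw [← Real.cos_pi_div_four]
      exact cos_le_cos_of_nonneg_of_le_pi (by positivity) (by linarith) (by linarith)
    have h2 : sin (π / 18) ≤ π / 18 := Real.sin_le (by positivity)
    have h3 : 0 < sin (π / 18) := sin_pos_of_pos_of_lt_pi (by positivity) (by linarith)
    have hsqrt : (14 : ℝ) / 10 ≤ Real.sqrt 2 := by
      nlinarith [Real.sq_sqrt (by norm_num : (0:ℝ) ≤ 2), Real.sqrt_nonneg 2]
    rw [tan_eq_sin_div_cos, hs, hc, le_div_iff₀ h3]
    nlinarith
  have h4 : arctan (32 / 10) ≤ 4 * π / 9 := by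
    calc arctan (32 / 10) ≤ arctan (tan (4 * π / 9)) := arctan_strictMono.monotone key
      _ = 4 * π / 9 := arctan_tan (by linarith) (by linarith)
  have hb := abs_le.1 hm
  rw [abs_le]
  constructor
  · have : arctan (-(32 / 10)) ≤ arctan m := arctan_strictMono.monotone (by linarith [hb.1])
    rw [arctan_neg] at this
    linarith
  · exact (arctan_strictMono.monotone hb.2).trans h4
lemma aux9_volume_box (a b c d : ℝ) :
    volume {x : E | x 0 ∈ Icc a b ∧ x 1 ∈ Icc c d} =
      ENNReal.ofReal (b - a) * ENNReal.ofReal (d - c) := by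
  have hmp := EuclideanSpace.volume_preserving_symm_measurableEquiv_toLp (Fin 2)
  have hset : {x : E | x 0 ∈ Icc a b ∧ x 1 ∈ Icc c d} =
      (MeasurableEquiv.toLp 2 (Fin 2 → ℝ)).symm ⁻¹' (Set.univ.pi ![Icc a b, Icc c d]) := by
    ext x
    simp [Set.mem_univ_pi, Fin.forall_fin_two]
  rw [hset, hmp.measure_preimage ((MeasurableSet.univ_pi (fun i =>
    by fin_cases i <;> exact measurableSet_Icc)).nullMeasurableSet)]
  rw [volume_pi_pi]
  rw [Fin.prod_univ_two]
  simp [Real.volume_Icc]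
end Aux9

theorem statement_9 :
    ∃ c₆ : ℝ, ∀ C₆ : ℝ, c₆ ≤ C₆ → ∃ c₅ : ℝ, ∀ C₅ : ℝ, c₅ ≤ C₅ →
    ∃ c₄ : ℝ, ∀ C₄ : ℝ, c₄ ≤ C₄ → ∃ c₃ : ℝ, ∀ C₃ : ℝ, c₃ ≤ C₃ →
    ∃ c₂ : ℝ, ∀ C₂ : ℝ, c₂ ≤ C₂ → ∃ s₀ : ℝ, ∀ s : ℝ, s₀ ≤ s →
      ∀ P : Set E, IsFat (C₅ * s) P → IsHorizontal P →
        (C₂ * s) ^ 2 ≤ (volume P).toReal →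
        ∃ a : ℝ, IsAdmissible C₃ C₄ s P a := by
  classical
  refine ⟨1, fun C₆ _ => ⟨1, fun C₅ _ => ⟨1, fun C₄ hC₄ => ⟨1, fun C₃ hC₃ =>
    ⟨200 * (C₃ + 1) * (C₄ + 1), fun C₂ hC₂ => ⟨1, fun s hs P hfat hhor harea => ?_⟩⟩⟩⟩⟩⟩
  obtain ⟨hconv, hbd, -, -⟩ := hfat
  by_contra hno
  push_neg at hno
  have hC₂' : (800 : ℝ) ≤ C₂ := by nlinarith
  have hs0 : (0 : ℝ) < s := by linarith
  have hCs : 0 < C₂ * s := by nlinarith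
  have hC4s : 0 < C₄ * s := by nlinarith
  have hne : P.Nonempty := by
    rw [Set.nonempty_iff_ne_empty]
    intro h
    rw [h] at harea
    simp at harea
    rcases harea with h' | h' <;> nlinarith
  obtain ⟨p₀, hp₀⟩ := id hne
  set W := xmax P - xmin P with hWdef
  set H := ymax P - ymin P with hHdef
  have hb₀ := aux9_mem_bounds hbd hp₀
  have hW0 : 0 ≤ W := by rw [hWdef]; linarith [hb₀.1, hb₀.2.1]
  have hH0 : 0 ≤ H := by rw [hHdef]; linarith [hb₀.2.2.1, hb₀.2.2.2]
  have hsub : P ⊆ {x : E | x 0 ∈ Icc (xmin P) (xmax P) ∧ x 1 ∈ Icc (ymin P) (ymax P)} := by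
    intro x hx
    have h := aux9_mem_bounds hbd hx
    exact ⟨⟨h.1, h.2.1⟩, h.2.2.1, h.2.2.2⟩
  have hvol : (volume P).toReal ≤ W * H := by
    have h1 := measure_mono (μ := volume) hsub
    rw [aux9_volume_box] at h1
    have h2 := ENNReal.toReal_mono (by finiteness) h1
    rwa [ENNReal.toReal_mul, ENNReal.toReal_ofReal (by linarith),
      ENNReal.toReal_ofReal (by linarith)] at h2
  have hWH : (C₂ * s) ^ 2 ≤ W * H := le_trans harea hvol
  have hHW : H ≤ W := hhor
  have hWC : C₂ * s ≤ W := by nlinarith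
  have hWpos : 0 < W := lt_of_lt_of_le hCs hWC
  set N : ℕ := ⌈9 * C₃⌉₊ + 5 with hNdef
  have hN1 : 9 * C₃ + 5 ≤ (N : ℝ) := by
    have := Nat.le_ceil (9 * C₃)
    rw [hNdef]; push_cast; linarith
  have hN2 : (N : ℝ) ≤ 9 * C₃ + 6 := by
    have := Nat.ceil_lt_add_one (by positivity : (0 : ℝ) ≤ 9 * C₃)
    rw [hNdef]; push_cast; linarith
  obtain ⟨b, hbdef⟩ : ∃ b : ℕ → ℝ, b = fun i : ℕ => xmin P + W / 3 + C₄ * s * (3 * (i : ℝ) + 2) :=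
    ⟨_, rfl⟩
  have hgrid : ∀ i : ℕ, i < N →
      xmin P + W / 3 ≤ b i - C₄ * s ∧ b i + C₄ * s ≤ xmax P - W / 3 := by
    intro i hi
    have hiN : (i : ℝ) + 1 ≤ N := by exact_mod_cast hi
    have hi0 : (0 : ℝ) ≤ (i : ℝ) := Nat.cast_nonneg i
    constructor
    · simp only [hbdef]
      have h6 := mul_nonneg hC4s.le (by positivity : (0 : ℝ) ≤ 3 * (i : ℝ) + 1)
      linarith
    · simp only [hbdef]
      have e1 : C₄ * s * (3 * (i : ℝ) + 3) ≤ 3 * (C₄ * s) * (9 * C₃ + 6) := by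
        have h5 := mul_le_mul_of_nonneg_left (hiN.trans hN2)
          (by positivity : (0 : ℝ) ≤ 3 * (C₄ * s))
        linarith
      have e3 : 3 * (C₄ * s) * (9 * C₃ + 6) ≤ W / 3 := by
        have h4 : 200 * (C₃ + 1) * (C₄ + 1) * s ≤ C₂ * s :=
          mul_le_mul_of_nonneg_right hC₂ hs0.le
        have hC₃0' : (0 : ℝ) < C₃ := by linarith
        have hC₄0' : (0 : ℝ) < C₄ := by linarith
        linarith [mul_pos (mul_pos hC₃0' hC₄0') hs0, mul_pos hC₃0' hs0,
          mul_pos hC₄0' hs0, hs0]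
      linarith
  have hmid : ∀ x : ℝ, xmin P + W / 3 ≤ x → x ≤ xmax P - W / 3 →
      {y : ℝ | pt x y ∈ P}.Nonempty := fun x h1 h2 =>
    aux9_chord_nonempty (a := x) hconv hne (by linarith) (by linarith)
  have hbc : ∀ i, i < N → {y : ℝ | pt (b i - C₄ * s) y ∈ P}.Nonempty ∧
      {y : ℝ | pt (b i + C₄ * s) y ∈ P}.Nonempty := by
    intro i hi
    obtain ⟨h1, h2⟩ := hgrid i hi
    exact ⟨hmid _ (by linarith) (by linarith), hmid _ (by linarith) (by linarith)⟩
  set badU : ℕ → Prop := fun i => ∃ m₁ ∈ upperSlopes P (b i - C₄ * s),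
    ∃ m₂ ∈ upperSlopes P (b i + C₄ * s),
      1 / C₃ < Real.arctan m₁ - Real.arctan m₂ with hbadU
  set badL : ℕ → Prop := fun i => ∃ m₁ ∈ lowerSlopes P (b i - C₄ * s),
    ∃ m₂ ∈ lowerSlopes P (b i + C₄ * s),
      1 / C₃ < Real.arctan m₂ - Real.arctan m₁ with hbadL
  have hfail : ∀ i, i < N → badU i ∨ badL i := by
    intro i hi
    obtain ⟨hg1, hg2⟩ := hgrid i hi
    by_contra hcon
    push_neg at hcon
    obtain ⟨hnu, hnl⟩ := hcon
    simp only [hbadU] at hnu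
    simp only [hbadL] at hnl
    push_neg at hnu hnl
    apply hno (b i)
    have hmidb : xmin P + W / 3 ≤ b i ∧ b i ≤ xmax P - W / 3 := ⟨by linarith, by linarith⟩
    have hsl := aux9_slope_bound hconv hbd hne hHW hWpos hmidb.1 hmidb.2
    have hpos1 : xmin P + C₄ * s < b i := by linarith
    have hpos2 : b i < xmax P - C₄ * s := by linarith
    unfold IsAdmissible
    refine ⟨hpos1, hpos2, hmid _ hmidb.1 hmidb.2, ?_, ?_, hnu, hnl⟩
    · exact fun m hm => aux9_arctan_bound (hsl.1 m hm)
    · exact fun m hm => aux9_arctan_bound (hsl.2 m hm)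
  set SU := (Finset.range N).filter badU with hSU
  set SL := (Finset.range N).filter badL with hSL
  have hcover : Finset.range N ⊆ SU ∪ SL := by
    intro i hi
    rcases hfail i (Finset.mem_range.1 hi) with h | h
    · exact Finset.mem_union_left _ (Finset.mem_filter.2 ⟨hi, h⟩)
    · exact Finset.mem_union_right _ (Finset.mem_filter.2 ⟨hi, h⟩)
  have hcardN : (N : ℝ) ≤ (SU.card : ℝ) + (SL.card : ℝ) := by
    have : N ≤ SU.card + SL.card :=
      (Finset.card_range N) ▸ le_trans (Finset.card_le_card hcover) (Finset.card_union_le _ _)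
    exact_mod_cast this
  have hmemN : ∀ i ∈ SU, i < N := fun i hi => Finset.mem_range.1 (Finset.mem_filter.1 hi).1
  have hmemN' : ∀ i ∈ SL, i < N := fun i hi => Finset.mem_range.1 (Finset.mem_filter.1 hi).1
  have hsep : ∀ i j : ℕ, i < j → b i + C₄ * s < b j - C₄ * s := by
    intro i j hij
    have h1 : (i : ℝ) + 1 ≤ j := by exact_mod_cast hij
    simp only [hbdef]
    have h6 := mul_le_mul_of_nonneg_left h1 (by positivity : (0 : ℝ) ≤ 3 * (C₄ * s))
    linarith
  have hC₃0 : (0 : ℝ) < 1 / C₃ := by positivity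
  -- upper count
  have hwitU : ∀ i ∈ SU, ∃ m₁, m₁ ∈ upperSlopes P (b i - C₄ * s) ∧
      ∃ m₂, m₂ ∈ upperSlopes P (b i + C₄ * s) ∧
        1 / C₃ < Real.arctan m₁ - Real.arctan m₂ := by
    intro i hi
    have h := (Finset.mem_filter.1 hi).2
    simp only [hbadU] at h
    exact h
  choose! mU₁ hmU₁ mU₂ hmU₂ hgtU using hwitU
  have hUbound : (SU.card : ℝ) ≤ Real.pi / (1 / C₃) + 2 := by
    refine aux9_card_bound SU (fun i => Real.arctan (mU₂ i)) hC₃0 ?_ ?_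
    · intro i hi j hj hij
      have hmono : mU₁ j ≤ mU₂ i :=
        aux9_upper_slopes_anti (hsep i j hij) (hbc i (hmemN i hi)).2 (hbc j (hmemN j hj)).1
          (hmU₂ i hi) (hmU₁ j hj)
      have h1 := Real.arctan_strictMono.monotone hmono
      have h2 := hgtU j hj
      linarith
    · intro i _
      exact abs_le.2 ⟨(Real.neg_pi_div_two_lt_arctan _).le, (Real.arctan_lt_pi_div_two _).le⟩
  -- lower count
  have hwitL : ∀ i ∈ SL, ∃ m₁, m₁ ∈ lowerSlopes P (b i - C₄ * s) ∧
      ∃ m₂, m₂ ∈ lowerSlopes P (b i + C₄ * s) ∧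
        1 / C₃ < Real.arctan m₂ - Real.arctan m₁ := by
    intro i hi
    have h := (Finset.mem_filter.1 hi).2
    simp only [hbadL] at h
    exact h
  choose! mL₁ hmL₁ mL₂ hmL₂ hgtL using hwitL
  have hLbound : (SL.card : ℝ) ≤ Real.pi / (1 / C₃) + 2 := by
    refine aux9_card_bound SL (fun i => -Real.arctan (mL₂ i)) hC₃0 ?_ ?_
    · intro i hi j hj hij
      have hmono : mL₂ i ≤ mL₁ j :=
        aux9_lower_slopes_mono (hsep i j hij) (hbc i (hmemN' i hi)).2 (hbc j (hmemN' j hj)).1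
          (hmL₂ i hi) (hmL₁ j hj)
      have h1 := Real.arctan_strictMono.monotone hmono
      have h2 := hgtL j hj
      linarith
    · intro i _
      rw [abs_neg]
      exact abs_le.2 ⟨(Real.neg_pi_div_two_lt_arctan _).le, (Real.arctan_lt_pi_div_two _).le⟩
  have hdiv : Real.pi / (1 / C₃) = Real.pi * C₃ := by field_simp
  have hπ : Real.pi ≤ 4 := Real.pi_le_four
  have hπC : Real.pi * C₃ ≤ 4 * C₃ := by nlinarith
  rw [hdiv] at hUbound hLbound
  linarith
end
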